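/- arXiv:1401.0570 — 3 statements merged into one kernel-verified Lean document; each statement's English description precedes it below -/
import Mathlib

section
/- The group Diff^ω(I, ∂I) of real-analytic diffeomorphisms of the interval fixing the endpoints is bi-orderable. -/
open Set

namespace Stmt

lemma negOne_mem_I : (-1 : ℝ) ∈ Set.Icc (-1 : ℝ) 1 := by norm_num
lemma one_mem_I : (1 : ℝ) ∈ Set.Icc (-1 : ℝ) 1 := by norm_num

/-- Membership in `Diff^ω(I, ∂I)`: a homeomorphism `f` of `I = [-1,1]` onto itself fixing the
endpoints `-1` and `1` such that both `f` and `f⁻¹` are real-analytic at every point of `I`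
(one-sidedly at the endpoints). -/
def IsDiffOmega (f : Equiv.Perm (Set.Icc (-1 : ℝ) 1)) : Prop :=
  Continuous f ∧ Continuous f.symm ∧
  f ⟨-1, negOne_mem_I⟩ = ⟨-1, negOne_mem_I⟩ ∧ f ⟨1, one_mem_I⟩ = ⟨1, one_mem_I⟩ ∧
  (∃ F : ℝ → ℝ, AnalyticOn ℝ F (Set.Icc (-1 : ℝ) 1) ∧
    ∀ t : (Set.Icc (-1 : ℝ) 1), F t = ((f t : ℝ))) ∧
  (∃ G : ℝ → ℝ, AnalyticOn ℝ G (Set.Icc (-1 : ℝ) 1) ∧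
    ∀ t : (Set.Icc (-1 : ℝ) 1), G t = ((f.symm t : ℝ)))

lemma analytic_part_mul {f g : Equiv.Perm (Set.Icc (-1 : ℝ) 1)}
    (hf : ∃ F : ℝ → ℝ, AnalyticOn ℝ F (Set.Icc (-1 : ℝ) 1) ∧
      ∀ t : (Set.Icc (-1 : ℝ) 1), F t = ((f t : ℝ)))
    (hg : ∃ G : ℝ → ℝ, AnalyticOn ℝ G (Set.Icc (-1 : ℝ) 1) ∧
      ∀ t : (Set.Icc (-1 : ℝ) 1), G t = ((g t : ℝ))) :
    ∃ F : ℝ → ℝ, AnalyticOn ℝ F (Set.Icc (-1 : ℝ) 1) ∧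
      ∀ t : (Set.Icc (-1 : ℝ) 1), F t = (((f * g) t : ℝ)) := by
  obtain ⟨F, hF, hFf⟩ := hf
  obtain ⟨G, hG, hGg⟩ := hg
  have hmaps : Set.MapsTo G (Set.Icc (-1 : ℝ) 1) (Set.Icc (-1 : ℝ) 1) := by
    intro x hx
    have h := hGg ⟨x, hx⟩
    simp only [Subtype.coe_mk] at h
    rw [h]
    exact (g ⟨x, hx⟩).2
  refine ⟨F ∘ G, hF.comp hG hmaps, fun t => ?_⟩
  show F (G ↑t) = _
  rw [hGg t, hFf (g t)]
  rfl

/-- The group `Diff^ω(I, ∂I)` of real-analytic diffeomorphisms of `I = [-1,1]` fixing the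
endpoints, as a subgroup of the group of bijections of `I`. -/
def DiffOmegaGroup : Subgroup (Equiv.Perm (Set.Icc (-1 : ℝ) 1)) where
  carrier := {f | IsDiffOmega f}
  one_mem' := by
    refine ⟨continuous_id, continuous_id, rfl, rfl, ⟨id, analyticOn_id, fun t => rfl⟩,
      ⟨id, analyticOn_id, fun t => rfl⟩⟩
  mul_mem' := by
    rintro f g ⟨hfc1, hfc2, hfe1, hfe2, hf1, hf2⟩ ⟨hgc1, hgc2, hge1, hge2, hg1, hg2⟩
    refine ⟨hfc1.comp hgc1, by exact hgc2.comp hfc2, ?_, ?_,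
      analytic_part_mul hf1 hg1, ?_⟩
    · show f (g _) = _
      rw [hge1, hfe1]
    · show f (g _) = _
      rw [hge2, hfe2]
    · have : (f * g).symm = g⁻¹ * f⁻¹ := rfl
      rw [this]
      exact analytic_part_mul hg2 hf2
  inv_mem' := by
    rintro f ⟨hc1, hc2, he1, he2, hF, hG⟩
    refine ⟨hc2, by exact hc1, ?_, ?_, hG, by exact hF⟩
    · show f.symm _ = _
      rw [Equiv.symm_apply_eq, he1]
    · show f.symm _ = _
      rw [Equiv.symm_apply_eq, he2]

/-- A group `G` is bi-orderable if there is a strict total order `<` on `G` such that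
`g < h` implies both `f*g < f*h` and `g*f < h*f` for all `f, g, h`. -/
def BiOrderable (G : Type*) [Group G] : Prop :=
  ∃ r : G → G → Prop, IsStrictTotalOrder G r ∧
    ∀ f g h : G, r g h → r (f * g) (f * h) ∧ r (g * f) (h * f)

open Filter Topology

/-- Evaluation of a permutation of `Icc (-1) 1` as a real function (identity outside). -/
noncomputable def ev (f : Equiv.Perm (Set.Icc (-1 : ℝ) 1)) : ℝ → ℝ :=
  fun t => if ht : t ∈ Set.Icc (-1 : ℝ) 1 then ((f ⟨t, ht⟩ : ℝ)) else t

lemma ev_of_mem (f : Equiv.Perm (Set.Icc (-1 : ℝ) 1)) {t : ℝ} (ht : t ∈ Set.Icc (-1 : ℝ) 1) :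
    ev f t = ((f ⟨t, ht⟩ : ℝ)) := dif_pos ht

lemma ev_mem (f : Equiv.Perm (Set.Icc (-1 : ℝ) 1)) {t : ℝ} (ht : t ∈ Set.Icc (-1 : ℝ) 1) :
    ev f t ∈ Set.Icc (-1 : ℝ) 1 := by
  rw [ev_of_mem f ht]; exact (f ⟨t, ht⟩).2

lemma ev_mul (f g : Equiv.Perm (Set.Icc (-1 : ℝ) 1)) {t : ℝ} (ht : t ∈ Set.Icc (-1 : ℝ) 1) :
    ev (f * g) t = ev f (ev g t) := by
  rw [ev_of_mem (f * g) ht, ev_of_mem g ht, ev_of_mem f (g ⟨t, ht⟩).2]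
  congr 1

lemma ev_injOn (f : Equiv.Perm (Set.Icc (-1 : ℝ) 1)) :
    Set.InjOn (ev f) (Set.Icc (-1 : ℝ) 1) := by
  intro a ha b hb hab
  rw [ev_of_mem f ha, ev_of_mem f hb] at hab
  have : f ⟨a, ha⟩ = f ⟨b, hb⟩ := Subtype.ext hab
  have := f.injective this
  exact congrArg Subtype.val this

lemma ev_continuousOn (f : Equiv.Perm (Set.Icc (-1 : ℝ) 1)) (hc : Continuous f) :
    ContinuousOn (ev f) (Set.Icc (-1 : ℝ) 1) := by
  rw [continuousOn_iff_continuous_restrict]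
  have : Set.restrict (Set.Icc (-1 : ℝ) 1) (ev f) = fun x => ((f x : ℝ)) := by
    funext x
    show ev f x = _
    rw [ev_of_mem f x.2]
  rw [show (Set.Icc (-1 : ℝ) 1).domRestrict (ev f) = _ from this]
  exact continuous_subtype_val.comp hc

lemma ev_negOne {f : Equiv.Perm (Set.Icc (-1 : ℝ) 1)}
    (h : f ⟨-1, negOne_mem_I⟩ = ⟨-1, negOne_mem_I⟩) : ev f (-1) = -1 := by
  rw [ev_of_mem f negOne_mem_I, h]

lemma ev_one {f : Equiv.Perm (Set.Icc (-1 : ℝ) 1)}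
    (h : f ⟨1, one_mem_I⟩ = ⟨1, one_mem_I⟩) : ev f (1) = 1 := by
  rw [ev_of_mem f one_mem_I, h]

lemma ev_strictMonoOn {f : Equiv.Perm (Set.Icc (-1 : ℝ) 1)} (hf : IsDiffOmega f) :
    StrictMonoOn (ev f) (Set.Icc (-1 : ℝ) 1) := by
  obtain ⟨hc, -, he1, he2, -, -⟩ := hf
  refine ContinuousOn.strictMonoOn_of_injOn_Icc (by norm_num) ?_ (ev_continuousOn f hc)
    (ev_injOn f)
  rw [ev_negOne he1, ev_one he2]; norm_num

lemma Ioo_mem_l : Set.Ioo (-1 : ℝ) 1 ∈ 𝓝[>] (-1 : ℝ) :=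
  Ioo_mem_nhdsGT_of_mem (by constructor <;> norm_num)

lemma l_le_nhdsWithin_Icc : 𝓝[>] (-1 : ℝ) ≤ 𝓝[Set.Icc (-1 : ℝ) 1] (-1 : ℝ) := by
  refine le_inf nhdsWithin_le_nhds (le_principal_iff.2 ?_)
  exact mem_of_superset Ioo_mem_l Set.Ioo_subset_Icc_self

/-- The analytic extension from `IsDiffOmega` agrees with `ev`. -/
lemma ext_eq_ev {f : Equiv.Perm (Set.Icc (-1 : ℝ) 1)} {F : ℝ → ℝ}
    (hF : ∀ t : (Set.Icc (-1 : ℝ) 1), F t = ((f t : ℝ))) {t : ℝ}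
    (ht : t ∈ Set.Icc (-1 : ℝ) 1) : F t = ev f t := by
  rw [ev_of_mem f ht]; exact hF ⟨t, ht⟩

/-- Key dichotomy: two distinct analytic diffeos are strictly comparable near `-1⁺`. -/
lemma key_dichotomy {f g : Equiv.Perm (Set.Icc (-1 : ℝ) 1)}
    (hf : IsDiffOmega f) (hg : IsDiffOmega g) (hne : f ≠ g) :
    (∀ᶠ t in 𝓝[>] (-1 : ℝ), ev f t < ev g t) ∨
    (∀ᶠ t in 𝓝[>] (-1 : ℝ), ev g t < ev f t) := by
  obtain ⟨hfc, -, hfe1, -, ⟨F, hFa, hFf⟩, -⟩ := hf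
  obtain ⟨hgc, -, hge1, -, ⟨G, hGa, hGg⟩, -⟩ := hg
  set D : ℝ → ℝ := fun t => F t - G t with hDdef
  have hDa : AnalyticOn ℝ D (Set.Icc (-1 : ℝ) 1) := hFa.sub hGa
  have hDev : ∀ t ∈ Set.Icc (-1 : ℝ) 1, D t = ev f t - ev g t := by
    intro t ht
    simp only [hDdef, ext_eq_ev hFf ht, ext_eq_ev hGg ht]
  have hDcont : ContinuousOn D (Set.Icc (-1 : ℝ) 1) := hDa.continuousOn
  have hDneg1 : D (-1) = 0 := by
    rw [hDev (-1) negOne_mem_I, ev_negOne hfe1, ev_negOne hge1]; ring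
  set Z : Set ℝ := {t | t ∈ Set.Icc (-1 : ℝ) 1 ∧ D t ≠ 0} with hZdef
  have hZne : Z.Nonempty := by
    have : ∃ x : (Set.Icc (-1 : ℝ) 1), f x ≠ g x := by
      by_contra h
      push_neg at h
      exact hne (Equiv.ext h)
    obtain ⟨x, hx⟩ := this
    refine ⟨(x : ℝ), x.2, ?_⟩
    rw [hDev x x.2, ev_of_mem f x.2, ev_of_mem g x.2, sub_ne_zero]
    intro h
    exact hx (Subtype.ext (by simpa using h))
  have hZbdd : BddBelow Z := ⟨-1, fun z hz => hz.1.1⟩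
  set s : ℝ := sInf Z with hsdef
  have hs1 : -1 ≤ s := le_csInf hZne (fun z hz => hz.1.1)
  have hs2 : s ≤ 1 := by
    obtain ⟨z, hz⟩ := hZne
    exact le_trans (csInf_le hZbdd hz) hz.1.2
  have hsI : s ∈ Set.Icc (-1 : ℝ) 1 := ⟨hs1, hs2⟩
  have hDlt : ∀ t ∈ Set.Icc (-1 : ℝ) 1, t < s → D t = 0 := by
    intro t ht hts
    by_contra h
    exact absurd (csInf_le hZbdd ⟨ht, h⟩) (not_le.2 hts)
  -- s = -1
  have hs : s = -1 := by
    by_contra hs'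
    have hs1' : -1 < s := lt_of_le_of_ne hs1 (Ne.symm hs')
    have hDs : D s = 0 := by
      by_contra hDs
      have hcw : ContinuousWithinAt D (Set.Icc (-1 : ℝ) 1) s := hDcont s hsI
      have hev : ∀ᶠ t in 𝓝[Set.Icc (-1 : ℝ) 1] s, D t ≠ 0 :=
        hcw.eventually_ne hDs
      obtain ⟨U, hUo, hsU, hU⟩ := mem_nhdsWithin.1 hev
      obtain ⟨δ, hδ, hball⟩ := Metric.isOpen_iff.1 hUo s hsU
      set t : ℝ := max (-1) (s - δ / 2) with htdef
      have ht1 : -1 ≤ t := le_max_left _ _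
      have hts : t < s := by
        apply max_lt hs1'
        linarith
      have htI : t ∈ Set.Icc (-1 : ℝ) 1 := ⟨ht1, le_trans hts.le hs2⟩
      have htclose : s - t < δ := by
        simp only [htdef]
        rcases le_total (-1 : ℝ) (s - δ / 2) with hle | hle
        · rw [max_eq_right hle]; linarith
        · rw [max_eq_left hle]; linarith
      have htU : t ∈ U := by
        apply hball
        rw [Metric.mem_ball, Real.dist_eq, abs_lt]
        constructor <;> linarith
      exact hU ⟨htU, htI⟩ (hDlt t htI hts)
    obtain ⟨h, -, hEq, hh⟩ := (hDa s hsI).exists_analyticAt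
    rw [Set.insert_eq_of_mem hsI] at hEq
    rcases hh.eventually_eq_zero_or_eventually_ne_zero with hcase | hcase
    · -- h ≡ 0 near s: contradicts points of Z close to s
      obtain ⟨δ, hδ, hball⟩ := Metric.eventually_nhds_iff_ball.1 hcase
      obtain ⟨z, hzZ, hzlt⟩ := exists_lt_of_csInf_lt hZne (by linarith : sInf Z < s + δ)
      have hzs : s ≤ z := csInf_le hZbdd hzZ
      have hzb : z ∈ Metric.ball s δ := by
        rw [Metric.mem_ball, Real.dist_eq, abs_lt]
        constructor <;> [linarith; linarith]
      exact hzZ.2 ((hEq hzZ.1).trans (hball z hzb))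
    · -- h ≠ 0 on punctured nbhd: contradicts D = 0 left of s
      have hfreq : ∀ᶠ t in 𝓝[<] s, h t = 0 := by
        filter_upwards [Ioo_mem_nhdsLT_of_mem (Set.mem_Ioc.2 ⟨hs1', le_refl s⟩)] with t ht
        have htI : t ∈ Set.Icc (-1 : ℝ) 1 := ⟨ht.1.le, le_trans ht.2.le hs2⟩
        rw [← hEq htI]
        exact hDlt t htI ht.2
      have hne' : ∀ᶠ t in 𝓝[<] s, h t ≠ 0 :=
        hcase.filter_mono (nhdsWithin_mono s (fun t ht => ne_of_lt ht))
      obtain ⟨t, h1, h2⟩ := (hfreq.and hne').exists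
      exact h2 h1
  -- now work at -1
  obtain ⟨h, -, hEq, hh⟩ := (hDa (-1) negOne_mem_I).exists_analyticAt
  rw [Set.insert_eq_of_mem negOne_mem_I] at hEq
  rcases hh.eventually_eq_zero_or_eventually_ne_zero with hcase | hcase
  · -- h ≡ 0 near -1 contradicts sInf Z = -1
    exfalso
    obtain ⟨δ, hδ, hball⟩ := Metric.eventually_nhds_iff_ball.1 hcase
    obtain ⟨z, hzZ, hzlt⟩ := exists_lt_of_csInf_lt hZne
      (by rw [← hsdef, hs]; linarith : sInf Z < -1 + δ)
    have hzs : -1 ≤ z := hzZ.1.1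
    have hzb : z ∈ Metric.ball (-1) δ := by
      rw [Metric.mem_ball, Real.dist_eq, abs_lt]
      constructor <;> [linarith; linarith]
    exact hzZ.2 ((hEq hzZ.1).trans (hball z hzb))
  · -- h ≠ 0 eventually on 𝓝[>] -1, hence D ≠ 0, hence constant sign
    have hDne : ∀ᶠ t in 𝓝[>] (-1 : ℝ), t ∈ Set.Ioo (-1 : ℝ) 1 ∧ D t ≠ 0 := by
      have h1 : ∀ᶠ t in 𝓝[>] (-1 : ℝ), h t ≠ 0 :=
        hcase.filter_mono (nhdsWithin_mono (-1) (fun t ht => ne_of_gt ht))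
      filter_upwards [h1, Ioo_mem_l] with t ht1 ht2
      exact ⟨ht2, by rw [hEq (Set.Ioo_subset_Icc_self ht2)]; exact ht1⟩
    obtain ⟨U, hUo, hmU, hU⟩ := mem_nhdsWithin.1 hDne
    obtain ⟨δ, hδ, hball⟩ := Metric.isOpen_iff.1 hUo (-1) hmU
    set a : ℝ := -1 + min δ 2 with hadef
    have ha1 : -1 < a := by
      simp only [hadef]
      have : (0:ℝ) < min δ 2 := lt_min hδ (by norm_num)
      linarith
    have ha2 : a ≤ 1 := by
      simp only [hadef]
      have : min δ 2 ≤ 2 := min_le_right _ _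
      linarith
    have hsub : ∀ t ∈ Set.Ioo (-1 : ℝ) a, t ∈ Set.Ioo (-1 : ℝ) 1 ∧ D t ≠ 0 := by
      intro t ht
      obtain ⟨htl, htr⟩ := ht
      have htr' : t < -1 + min δ 2 := htr
      have h1 : min δ 2 ≤ δ := min_le_left _ _
      refine hU ⟨hball ?_, htl⟩
      rw [Metric.mem_ball, Real.dist_eq, abs_lt]
      constructor <;> linarith
    -- constant sign on Ioo (-1) a
    set t₀ : ℝ := (-1 + a) / 2 with ht₀def
    have ht₀ : t₀ ∈ Set.Ioo (-1 : ℝ) a := ⟨by simp only [ht₀def]; linarith,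
      by simp only [ht₀def]; linarith⟩
    have hsign : (∀ t ∈ Set.Ioo (-1 : ℝ) a, 0 < D t) ∨ (∀ t ∈ Set.Ioo (-1 : ℝ) a, D t < 0) := by
      have hIooI : Set.Ioo (-1 : ℝ) a ⊆ Set.Icc (-1 : ℝ) 1 := fun t ht =>
        ⟨ht.1.le, le_trans ht.2.le ha2⟩
      have key : ∀ t ∈ Set.Ioo (-1 : ℝ) a, ∀ t' ∈ Set.Ioo (-1 : ℝ) a,
          0 < D t → 0 < D t' := by
        intro t ht t' ht' hDt
        rcases lt_trichotomy (D t') 0 with hneg | hzero | hpos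
        · exfalso
          have hcsub : Set.uIcc t' t ⊆ Set.Ioo (-1 : ℝ) a :=
            Set.OrdConnected.uIcc_subset Set.ordConnected_Ioo ht' ht
          have hcont : ContinuousOn D (Set.uIcc t' t) :=
            hDcont.mono (hcsub.trans hIooI)
          have : (0 : ℝ) ∈ Set.uIcc (D t') (D t) :=
            Set.mem_uIcc.2 (Or.inl ⟨hneg.le, hDt.le⟩)
          obtain ⟨c, hc, hDc⟩ := intermediate_value_uIcc hcont this
          exact (hsub c (hcsub hc)).2 hDc
        · exact absurd hzero (hsub t' ht').2
        · exact hpos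
      rcases lt_trichotomy (D t₀) 0 with hneg | hzero | hpos
      · right
        intro t ht
        by_contra hc
        push_neg at hc
        have : 0 < D t := lt_of_le_of_ne hc (Ne.symm (hsub t ht).2)
        exact absurd (key t ht t₀ ht₀ this) (not_lt.2 hneg.le)
      · exact absurd hzero (hsub t₀ ht₀).2
      · exact Or.inl (fun t ht => key t₀ ht₀ t ht hpos)
    have hIoo_mem : Set.Ioo (-1 : ℝ) a ∈ 𝓝[>] (-1 : ℝ) :=
      Ioo_mem_nhdsGT_of_mem (Set.mem_Ico.2 ⟨le_refl _, ha1⟩)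
    rcases hsign with hpos | hneg
    · right
      filter_upwards [hIoo_mem] with t ht
      have htI : t ∈ Set.Icc (-1 : ℝ) 1 := ⟨ht.1.le, le_trans ht.2.le ha2⟩
      have := hpos t ht
      rw [hDev t htI] at this
      linarith
    · left
      filter_upwards [hIoo_mem] with t ht
      have htI : t ∈ Set.Icc (-1 : ℝ) 1 := ⟨ht.1.le, le_trans ht.2.le ha2⟩
      have := hneg t ht
      rw [hDev t htI] at this
      linarith

lemma ev_tendsto {f : Equiv.Perm (Set.Icc (-1 : ℝ) 1)} (hf : IsDiffOmega f) :
    Tendsto (ev f) (𝓝[>] (-1 : ℝ)) (𝓝[>] (-1 : ℝ)) := by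
  obtain ⟨hc, -, he1, -, -, -⟩ := hf
  rw [tendsto_nhdsWithin_iff]
  constructor
  · have hcw : ContinuousWithinAt (ev f) (Set.Icc (-1 : ℝ) 1) (-1) :=
      ev_continuousOn f hc (-1) negOne_mem_I
    have := hcw.tendsto
    rw [ev_negOne he1] at this
    exact this.mono_left l_le_nhdsWithin_Icc
  · filter_upwards [Ioo_mem_l] with t ht
    have htI : t ∈ Set.Icc (-1 : ℝ) 1 := Set.Ioo_subset_Icc_self ht
    have h1 : -1 ≤ ev f t := (ev_mem f htI).1
    rcases lt_or_eq_of_le h1 with h | h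
    · exact h
    · exfalso
      have : ev f t = ev f (-1) := by rw [← h, ev_negOne he1]
      have := ev_injOn f htI negOne_mem_I this
      exact absurd this (ne_of_gt ht.1)

/-- The group `Diff^ω(I, ∂I)` is bi-orderable. -/
theorem diffOmega_biOrderable : BiOrderable DiffOmegaGroup := by
  refine ⟨fun f g => ∀ᶠ t in 𝓝[>] (-1 : ℝ), ev f.1 t < ev g.1 t, ?_, ?_⟩
  · refine { trichotomous := ?_, irrefl := ?_, trans := ?_ }
    · intro f g
      by_cases hfg : f = g
      · exact fun _ _ => hfg
      · have hne : f.1 ≠ g.1 := fun h => hfg (Subtype.ext h)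
        rcases key_dichotomy f.2 g.2 hne with h | h
        · exact fun h1 _ => absurd h h1
        · exact fun _ h2 => absurd h h2
    · intro f hf
      obtain ⟨t, ht⟩ := hf.exists
      exact lt_irrefl _ ht
    · intro f g h hfg hgh
      filter_upwards [hfg, hgh] with t h1 h2
      exact lt_trans h1 h2
  · intro f g h hgh
    constructor
    · filter_upwards [hgh, Ioo_mem_l] with t hlt ht
      have htI : t ∈ Set.Icc (-1 : ℝ) 1 := Set.Ioo_subset_Icc_self ht
      show ev (f.1 * g.1) t < ev (f.1 * h.1) t
      rw [ev_mul f.1 g.1 htI, ev_mul f.1 h.1 htI]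
      exact ev_strictMonoOn f.2 (ev_mem g.1 htI) (ev_mem h.1 htI) hlt
    · have hT := ev_tendsto f.2
      filter_upwards [hT.eventually hgh, Ioo_mem_l] with t hlt ht
      have htI : t ∈ Set.Icc (-1 : ℝ) 1 := Set.Ioo_subset_Icc_self ht
      show ev (g.1 * f.1) t < ev (h.1 * f.1) t
      rw [ev_mul g.1 f.1 htI, ev_mul h.1 f.1 htI]
      exact hlt
end Stmt
end

section
/- Let g ∈ PL(I, ∂I) with g ≠ id. Then for every positive integer n, the n-fold composition g^n has at least n − 1 breakpoints; equivalently, Δ(g^n) ≥ n. -/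
open Set

namespace Stmt

/-- A bijection of `I = [-1,1]` is piecewise affine if there are finitely many points
`-1 = x₀ < x₁ < ⋯ < x_k = 1` such that it is affine on each `[x_{i-1}, x_i]`. -/
def IsPL (f : Equiv.Perm (Set.Icc (-1 : ℝ) 1)) : Prop :=
  ∃ (k : ℕ) (x : Fin (k + 1) → ℝ), StrictMono x ∧ x 0 = -1 ∧ x (Fin.last k) = 1 ∧
    ∀ i : Fin k, ∃ a b : ℝ, ∀ t : (Set.Icc (-1 : ℝ) 1),
      x i.castSucc ≤ (t : ℝ) → (t : ℝ) ≤ x i.succ → ((f t : ℝ)) = a * (t : ℝ) + b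

/-- Membership in `PL(I, ∂I)`: a homeomorphism of `I = [-1,1]` onto itself fixing the
endpoints `-1` and `1` which is piecewise affine. -/
def IsPLHomeo (f : Equiv.Perm (Set.Icc (-1 : ℝ) 1)) : Prop :=
  Continuous f ∧ Continuous f.symm ∧
    f ⟨-1, negOne_mem_I⟩ = ⟨-1, negOne_mem_I⟩ ∧ f ⟨1, one_mem_I⟩ = ⟨1, one_mem_I⟩ ∧ IsPL f

/-- The breakpoints of `f`: points of `(-1,1)` at which `f` is not locally affine. -/
def breakpoints (f : Equiv.Perm (Set.Icc (-1 : ℝ) 1)) : Set ℝ :=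
  {t | t ∈ Set.Ioo (-1 : ℝ) 1 ∧ ¬ ∃ (a b ε : ℝ), 0 < ε ∧
    ∀ s : (Set.Icc (-1 : ℝ) 1), |(s : ℝ) - t| < ε → ((f s : ℝ)) = a * (s : ℝ) + b}

/-- `Δ(f)` is the number of breakpoints of `f` plus one. -/
noncomputable def Δ (f : Equiv.Perm (Set.Icc (-1 : ℝ) 1)) : ℕ :=
  (breakpoints f).ncard + 1

-- ======== auxiliary development ========

abbrev I01 : Set ℝ := Set.Icc (-1 : ℝ) 1

/-- `f` admits the affine representation `s ↦ a*s+b` on a right neighbourhood of `t`. -/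
def rAff (f : Equiv.Perm I01) (t : I01) (a b : ℝ) : Prop :=
  ∃ ε : ℝ, 0 < ε ∧ ∀ s : I01, (t : ℝ) ≤ s → (s : ℝ) < (t : ℝ) + ε → ((f s : ℝ)) = a * s + b

/-- `f` admits the affine representation `s ↦ a*s+b` on a left neighbourhood of `t`. -/
def lAff (f : Equiv.Perm I01) (t : I01) (a b : ℝ) : Prop :=
  ∃ ε : ℝ, 0 < ε ∧ ∀ s : I01, (t : ℝ) - ε < s → (s : ℝ) ≤ t → ((f s : ℝ)) = a * s + b

lemma exists_right (t : I01) (ht : (t : ℝ) < 1) {ε : ℝ} (hε : 0 < ε) :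
    ∃ s : I01, (t : ℝ) < s ∧ (s : ℝ) < (t : ℝ) + ε := by
  have ht1 : (-1 : ℝ) ≤ t := t.2.1
  refine ⟨⟨min ((t + 1)/2) (t + ε/2), ?_, ?_⟩, ?_, ?_⟩
  · simp only [le_min_iff]; constructor <;> nlinarith
  · exact le_trans (min_le_left _ _) (by nlinarith)
  · simp only [lt_min_iff]; constructor <;> nlinarith
  · exact lt_of_le_of_lt (min_le_right _ _) (by nlinarith)

lemma exists_left (t : I01) (ht : (-1 : ℝ) < t) {ε : ℝ} (hε : 0 < ε) :
    ∃ s : I01, (t : ℝ) - ε < s ∧ (s : ℝ) < t := by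
  have ht1 : (t : ℝ) ≤ 1 := t.2.2
  refine ⟨⟨max ((t - 1)/2) (t - ε/2), ?_, ?_⟩, ?_, ?_⟩
  · exact le_trans (by nlinarith) (le_max_left _ _)
  · simp only [max_le_iff]; constructor <;> nlinarith
  · exact lt_of_lt_of_le (by nlinarith) (le_max_right _ _)
  · simp only [max_lt_iff]; constructor <;> nlinarith

lemma rAff_val {f : Equiv.Perm I01} {t : I01} {a b : ℝ} (h : rAff f t a b) :
    ((f t : ℝ)) = a * t + b := by
  obtain ⟨ε, hε, H⟩ := h
  exact H t le_rfl (by linarith)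

lemma lAff_val {f : Equiv.Perm I01} {t : I01} {a b : ℝ} (h : lAff f t a b) :
    ((f t : ℝ)) = a * t + b := by
  obtain ⟨ε, hε, H⟩ := h
  exact H t (by linarith) le_rfl

lemma rAff_unique {f : Equiv.Perm I01} {t : I01} {a b a' b' : ℝ} (ht : (t : ℝ) < 1)
    (h : rAff f t a b) (h' : rAff f t a' b') : a = a' ∧ b = b' := by
  obtain ⟨ε, hε, H⟩ := h
  obtain ⟨ε', hε', H'⟩ := h'
  obtain ⟨s, hs1, hs2⟩ := exists_right t ht (lt_min hε hε')
  have e1 : a * s + b = a' * s + b' := by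
    rw [← H s hs1.le (lt_of_lt_of_le hs2 (by simp [min_le_left])),
        H' s hs1.le (lt_of_lt_of_le hs2 (by simp [min_le_right]))]
  have e2 : a * t + b = a' * t + b' := by rw [← rAff_val ⟨ε, hε, H⟩, rAff_val ⟨ε', hε', H'⟩]
  have ha : a = a' := by
    have := sub_ne_zero_of_ne (ne_of_gt hs1)
    have : (a - a') * ((s : ℝ) - t) = 0 := by ring_nf; nlinarith [e1, e2]
    rcases mul_eq_zero.1 this with h | h
    · linarith [sub_eq_zero.1 h]
    · exact absurd (sub_eq_zero.1 h) (ne_of_gt hs1)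
  exact ⟨ha, by rw [ha] at e2; linarith⟩

lemma lAff_unique {f : Equiv.Perm I01} {t : I01} {a b a' b' : ℝ} (ht : (-1 : ℝ) < t)
    (h : lAff f t a b) (h' : lAff f t a' b') : a = a' ∧ b = b' := by
  obtain ⟨ε, hε, H⟩ := h
  obtain ⟨ε', hε', H'⟩ := h'
  obtain ⟨s, hs1, hs2⟩ := exists_left t ht (lt_min hε hε')
  have m1 : (t:ℝ) - ε ≤ (t:ℝ) - min ε ε' := by
    have := min_le_left ε ε'; linarith
  have m2 : (t:ℝ) - ε' ≤ (t:ℝ) - min ε ε' := by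
    have := min_le_right ε ε'; linarith
  have e1 : a * s + b = a' * s + b' := by
    rw [← H s (lt_of_le_of_lt m1 hs1) hs2.le, H' s (lt_of_le_of_lt m2 hs1) hs2.le]
  have e2 : a * t + b = a' * t + b' := by rw [← lAff_val ⟨ε, hε, H⟩, lAff_val ⟨ε', hε', H'⟩]
  have ha : a = a' := by
    have : (a - a') * ((s : ℝ) - t) = 0 := by ring_nf; nlinarith [e1, e2]
    rcases mul_eq_zero.1 this with h | h
    · linarith [sub_eq_zero.1 h]
    · exact absurd (sub_eq_zero.1 h) (ne_of_lt hs2)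
  exact ⟨ha, by rw [ha] at e2; linarith⟩

-- ===== chain rules =====

lemma rAff_mul {f₂ f₁ : Equiv.Perm I01} {t : I01} {a b a' b' : ℝ}
    (hm : ∀ s u : I01, (s : ℝ) ≤ u → ((f₁ s : ℝ)) ≤ f₁ u)
    (h1 : rAff f₁ t a b) (h2 : rAff f₂ (f₁ t) a' b') :
    rAff (f₂ * f₁) t (a' * a) (a' * b + b') := by
  obtain ⟨ε, hε, H⟩ := h1
  obtain ⟨ε', hε', H'⟩ := h2
  refine ⟨min ε (ε' / (|a| + 1)), lt_min hε (by positivity), fun s hs1 hs2 => ?_⟩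
  have hs2a : (s : ℝ) < (t : ℝ) + ε := lt_of_lt_of_le hs2 (by simp [min_le_left])
  have hfs : ((f₁ s : ℝ)) = a * s + b := H s hs1 hs2a
  have hft : ((f₁ t : ℝ)) = a * t + b := rAff_val ⟨ε, hε, H⟩
  have hle : ((f₁ t : ℝ)) ≤ f₁ s := hm t s hs1
  have hlt : ((f₁ s : ℝ)) < (f₁ t : ℝ) + ε' := by
    have h1 : ((f₁ s : ℝ)) - f₁ t = a * ((s : ℝ) - t) := by rw [hfs, hft]; ring
    have h2 : a * ((s : ℝ) - t) ≤ |a| * ((s : ℝ) - t) := by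
      apply mul_le_mul_of_nonneg_right (le_abs_self a); linarith
    have h3 : (s : ℝ) - t < ε' / (|a| + 1) := by
      have := min_le_right ε (ε' / (|a| + 1)); linarith
    have h4 : |a| * ((s : ℝ) - t) < (|a| + 1) * (ε' / (|a| + 1)) := by
      have ha : (0:ℝ) ≤ |a| := abs_nonneg a
      have hd : 0 < |a| + 1 := by linarith
      nlinarith [abs_nonneg a, sub_nonneg.2 hs1]
    have h5 : (|a| + 1) * (ε' / (|a| + 1)) = ε' := by field_simp
    linarith
  have := H' (f₁ s) hle hlt
  calc (((f₂ * f₁) s : ℝ)) = ((f₂ (f₁ s) : ℝ)) := by rw [Equiv.Perm.mul_apply]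
    _ = a' * (f₁ s) + b' := this
    _ = a' * a * s + (a' * b + b') := by rw [hfs]; ring

lemma lAff_mul {f₂ f₁ : Equiv.Perm I01} {t : I01} {a b a' b' : ℝ}
    (hm : ∀ s u : I01, (s : ℝ) ≤ u → ((f₁ s : ℝ)) ≤ f₁ u)
    (h1 : lAff f₁ t a b) (h2 : lAff f₂ (f₁ t) a' b') :
    lAff (f₂ * f₁) t (a' * a) (a' * b + b') := by
  obtain ⟨ε, hε, H⟩ := h1
  obtain ⟨ε', hε', H'⟩ := h2
  refine ⟨min ε (ε' / (|a| + 1)), lt_min hε (by positivity), fun s hs1 hs2 => ?_⟩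
  have hs1a : (t : ℝ) - ε < s := by
    have := min_le_left ε (ε' / (|a| + 1)); linarith
  have hfs : ((f₁ s : ℝ)) = a * s + b := H s hs1a hs2
  have hft : ((f₁ t : ℝ)) = a * t + b := lAff_val ⟨ε, hε, H⟩
  have hle : ((f₁ s : ℝ)) ≤ f₁ t := hm s t hs2
  have hlt : ((f₁ t : ℝ)) - ε' < (f₁ s : ℝ) := by
    have h1 : ((f₁ t : ℝ)) - f₁ s = a * ((t : ℝ) - s) := by rw [hfs, hft]; ring
    have h2 : a * ((t : ℝ) - s) ≤ |a| * ((t : ℝ) - s) := by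
      apply mul_le_mul_of_nonneg_right (le_abs_self a); linarith
    have h3 : (t : ℝ) - s < ε' / (|a| + 1) := by
      have := min_le_right ε (ε' / (|a| + 1)); linarith
    have h4 : |a| * ((t : ℝ) - s) < (|a| + 1) * (ε' / (|a| + 1)) := by
      nlinarith [abs_nonneg a, sub_nonneg.2 hs2]
    have h5 : (|a| + 1) * (ε' / (|a| + 1)) = ε' := by field_simp
    linarith
  have := H' (f₁ s) hlt hle
  calc (((f₂ * f₁) s : ℝ)) = ((f₂ (f₁ s) : ℝ)) := by rw [Equiv.Perm.mul_apply]
    _ = a' * (f₁ s) + b' := this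
    _ = a' * a * s + (a' * b + b') := by rw [hfs]; ring

lemma rAff_one (t : I01) : rAff 1 t 1 0 :=
  ⟨1, one_pos, fun s _ _ => by simp⟩

lemma lAff_one (t : I01) : lAff 1 t 1 0 :=
  ⟨1, one_pos, fun s _ _ => by simp⟩

lemma rAff_pow {g : Equiv.Perm I01}
    (hm : ∀ s u : I01, (s : ℝ) ≤ u → ((g s : ℝ)) ≤ g u) :
    ∀ (n : ℕ) (A : ℕ → ℝ) (t : I01), (∀ j, j < n → ∃ b, rAff g ((g ^ j) t) (A j) b) →
      ∃ b, rAff (g ^ n) t (∏ j ∈ Finset.range n, A j) b := by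
  intro n
  induction n with
  | zero => intro A t _; exact ⟨0, by simpa using rAff_one t⟩
  | succ n ih =>
    intro A t h
    obtain ⟨b0, hb0⟩ := h 0 (Nat.succ_pos n)
    rw [show (g ^ 0) t = t by simp] at hb0
    obtain ⟨b1, hb1⟩ := ih (fun j => A (j + 1)) (g t) (fun j hj => by
      obtain ⟨b, hb⟩ := h (j + 1) (by omega)
      refine ⟨b, ?_⟩
      have : (g ^ (j + 1)) t = (g ^ j) (g t) := by
        rw [pow_succ, Equiv.Perm.mul_apply]
      rwa [this] at hb)
    have H2 := rAff_mul hm hb0 hb1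
    rw [← pow_succ] at H2
    have hprod : (∏ j ∈ Finset.range n, A (j + 1)) * A 0
        = ∏ j ∈ Finset.range (n + 1), A j := (Finset.prod_range_succ' A n).symm
    rw [hprod] at H2
    exact ⟨_, H2⟩

lemma lAff_pow {g : Equiv.Perm I01}
    (hm : ∀ s u : I01, (s : ℝ) ≤ u → ((g s : ℝ)) ≤ g u) :
    ∀ (n : ℕ) (A : ℕ → ℝ) (t : I01), (∀ j, j < n → ∃ b, lAff g ((g ^ j) t) (A j) b) →
      ∃ b, lAff (g ^ n) t (∏ j ∈ Finset.range n, A j) b := by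
  intro n
  induction n with
  | zero => intro A t _; exact ⟨0, by simpa using lAff_one t⟩
  | succ n ih =>
    intro A t h
    obtain ⟨b0, hb0⟩ := h 0 (Nat.succ_pos n)
    rw [show (g ^ 0) t = t by simp] at hb0
    obtain ⟨b1, hb1⟩ := ih (fun j => A (j + 1)) (g t) (fun j hj => by
      obtain ⟨b, hb⟩ := h (j + 1) (by omega)
      refine ⟨b, ?_⟩
      have : (g ^ (j + 1)) t = (g ^ j) (g t) := by
        rw [pow_succ, Equiv.Perm.mul_apply]
      rwa [this] at hb)
    have H2 := lAff_mul hm hb0 hb1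
    rw [← pow_succ] at H2
    have hprod : (∏ j ∈ Finset.range n, A (j + 1)) * A 0
        = ∏ j ∈ Finset.range (n + 1), A j := (Finset.prod_range_succ' A n).symm
    rw [hprod] at H2
    exact ⟨_, H2⟩

-- ===== breakpoint criteria =====

lemma mem_breakpoints {f : Equiv.Perm I01} {t : I01} {a b a' b' : ℝ}
    (ht : (t : ℝ) ∈ Set.Ioo (-1 : ℝ) 1)
    (h1 : rAff f t a b) (h2 : lAff f t a' b') (hne : a ≠ a') :
    (t : ℝ) ∈ breakpoints f := by
  refine ⟨ht, fun ⟨A, B, ε, hε, H⟩ => ?_⟩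
  have hr : rAff f t A B := ⟨ε, hε, fun s hs1 hs2 => H s (by rw [abs_lt]; constructor <;> linarith)⟩
  have hl : lAff f t A B := ⟨ε, hε, fun s hs1 hs2 => H s (by rw [abs_lt]; constructor <;> linarith)⟩
  have e1 := (rAff_unique ht.2 h1 hr).1
  have e2 := (lAff_unique ht.1 h2 hl).1
  exact hne (by rw [e1, e2])

lemma not_mem_breakpoints {f : Equiv.Perm I01} {t : I01} {a b a' b' : ℝ}
    (h1 : rAff f t a b) (h2 : lAff f t a' b') (heq : a = a') :
    (t : ℝ) ∉ breakpoints f := by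
  intro ⟨_, hno⟩
  apply hno
  have hbb : b = b' := by
    have v1 := rAff_val h1
    have v2 := lAff_val h2
    rw [heq] at v1; linarith
  obtain ⟨ε, hε, H⟩ := h1
  obtain ⟨ε', hε', H'⟩ := h2
  refine ⟨a, b, min ε ε', lt_min hε hε', fun s hs => ?_⟩
  rw [abs_lt] at hs
  rcases le_total (t : ℝ) s with h | h
  · exact H s h (by have := min_le_left ε ε'; linarith)
  · rw [heq, hbb]; exact H' s (by have := min_le_right ε ε'; linarith) h

lemma reps_of_not_mem_breakpoints {f : Equiv.Perm I01} {t : I01}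
    (ht : (t : ℝ) ∈ Set.Ioo (-1 : ℝ) 1) (hnb : (t : ℝ) ∉ breakpoints f) :
    ∃ a b, rAff f t a b ∧ lAff f t a b := by
  have : ∃ (a b ε : ℝ), 0 < ε ∧ ∀ s : I01, |(s : ℝ) - t| < ε → ((f s : ℝ)) = a * s + b := by
    by_contra h
    exact hnb ⟨ht, h⟩
  obtain ⟨a, b, ε, hε, H⟩ := this
  exact ⟨a, b, ⟨ε, hε, fun s hs1 hs2 => H s (by rw [abs_lt]; constructor <;> linarith)⟩,
    ⟨ε, hε, fun s hs1 hs2 => H s (by rw [abs_lt]; constructor <;> linarith)⟩⟩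

-- ===== PL structure, nat-indexed =====

lemma isPL_nat {f : Equiv.Perm I01} (hpl : IsPL f) :
    ∃ (k : ℕ) (X A B : ℕ → ℝ), 0 < k ∧ (∀ i j, i < j → j ≤ k → X i < X j) ∧
      X 0 = -1 ∧ X k = 1 ∧
      ∀ i, i < k → ∀ s : I01, X i ≤ s → (s : ℝ) ≤ X (i + 1) → ((f s : ℝ)) = A i * s + B i := by
  obtain ⟨k, x, hmono, h0, hlast, hpiece⟩ := hpl
  have hk : 0 < k := by
    by_contra h
    push_neg at h
    interval_cases k
    · have : x 0 = x (Fin.last 0) := by congr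
      rw [h0, hlast] at this; norm_num at this
  choose A B hAB using hpiece
  refine ⟨k, fun i => x ⟨min i k, by omega⟩,
    (fun i => if h : i < k then A ⟨i, h⟩ else 0),
    (fun i => if h : i < k then B ⟨i, h⟩ else 0), hk, ?_, ?_, ?_, ?_⟩
  · intro i j hij hjk
    apply hmono
    simp only [Fin.mk_lt_mk]
    omega
  · simpa using h0
  · simp only [min_self]
    rw [show (⟨k, by omega⟩ : Fin (k+1)) = Fin.last k from rfl]
    exact hlast
  · intro i hik s hs1 hs2
    simp only [dif_pos hik]
    have e1 : (⟨min i k, by omega⟩ : Fin (k+1)) = Fin.castSucc ⟨i, hik⟩ := by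
      simp [Fin.castSucc, Fin.ext_iff]; omega
    have e2 : (⟨min (i+1) k, by omega⟩ : Fin (k+1)) = Fin.succ ⟨i, hik⟩ := by
      simp [Fin.ext_iff]; omega
    simp only [e1] at hs1
    simp only [e2] at hs2
    exact hAB ⟨i, hik⟩ s hs1 hs2

lemma rAff_exists {f : Equiv.Perm I01} (hpl : IsPL f) (t : I01) (ht : (t : ℝ) < 1) :
    ∃ a b, rAff f t a b := by
  obtain ⟨k, X, A, B, hk, hmono, h0, hX1, hpiece⟩ := isPL_nat hpl
  classical
  set S := (Finset.range k).filter (fun i => X i ≤ t) with hS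
  have h0S : 0 ∈ S := by
    simp only [hS, Finset.mem_filter, Finset.mem_range]
    exact ⟨hk, by rw [h0]; exact t.2.1⟩
  set i := S.max' ⟨0, h0S⟩ with hi
  have hiS : i ∈ S := S.max'_mem _
  have hik : i < k := by
    have := Finset.mem_filter.1 hiS
    simpa using this.1
  have hXi : X i ≤ t := (Finset.mem_filter.1 hiS).2
  have hnext : (t : ℝ) < X (i + 1) := by
    rcases eq_or_lt_of_le (Nat.succ_le_of_lt hik) with h | h
    · have : X (i + 1) = 1 := by rw [show i + 1 = Nat.succ i from rfl, h]; exact hX1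
      rw [this]; exact ht
    · by_contra hcon
      push_neg at hcon
      have : i + 1 ∈ S := by
        simp only [hS, Finset.mem_filter, Finset.mem_range]
        exact ⟨h, hcon⟩
      have := S.le_max' _ this
      omega
  refine ⟨A i, B i, X (i + 1) - t, by linarith, fun s hs1 hs2 => ?_⟩
  exact hpiece i hik s (le_trans hXi hs1) (by linarith)

lemma lAff_exists {f : Equiv.Perm I01} (hpl : IsPL f) (t : I01) (ht : (-1 : ℝ) < t) :
    ∃ a b, lAff f t a b := by
  obtain ⟨k, X, A, B, hk, hmono, h0, hX1, hpiece⟩ := isPL_nat hpl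
  classical
  set S := (Finset.range (k + 1)).filter (fun j => (t : ℝ) ≤ X j) with hS
  have hkS : k ∈ S := by
    simp only [hS, Finset.mem_filter, Finset.mem_range]
    exact ⟨by omega, by rw [hX1]; exact t.2.2⟩
  set j := S.min' ⟨k, hkS⟩ with hj
  have hjS : j ∈ S := S.min'_mem _
  have hjk : j ≤ k := by
    have := Finset.mem_filter.1 hjS
    have := this.1; simp at this; omega
  have hXj : (t : ℝ) ≤ X j := (Finset.mem_filter.1 hjS).2
  have hj0 : j ≠ 0 := by
    intro h
    rw [h, h0] at hXj
    linarith
  have hprev : X (j - 1) < t := by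
    by_contra hcon
    push_neg at hcon
    have : j - 1 ∈ S := by
      simp only [hS, Finset.mem_filter, Finset.mem_range]
      exact ⟨by omega, hcon⟩
    have := S.min'_le _ this
    omega
  have hj1 : j - 1 + 1 = j := by omega
  refine ⟨A (j - 1), B (j - 1), (t : ℝ) - X (j - 1), by linarith, fun s hs1 hs2 => ?_⟩
  exact hpiece (j - 1) (by omega) s (by linarith) (by rw [hj1]; linarith)

lemma breakpoints_finite {f : Equiv.Perm I01} (hpl : IsPL f) : (breakpoints f).Finite := by
  obtain ⟨k, X, A, B, hk, hmono, h0, hX1, hpiece⟩ := isPL_nat hpl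
  apply Set.Finite.subset (Set.Finite.image X (Set.finite_Iio (k + 1)))
  intro t ht
  obtain ⟨htI, hno⟩ := ht
  by_contra him
  apply hno
  classical
  set S := (Finset.range k).filter (fun i => X i ≤ t) with hS
  have h0S : 0 ∈ S := by
    simp only [hS, Finset.mem_filter, Finset.mem_range]
    exact ⟨hk, by rw [h0]; linarith [htI.1]⟩
  set i := S.max' ⟨0, h0S⟩ with hi
  have hiS : i ∈ S := S.max'_mem _
  have hik : i < k := by simpa [hS] using (Finset.mem_filter.1 hiS).1
  have hXi : X i ≤ t := (Finset.mem_filter.1 hiS).2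
  have hXi' : X i < t := by
    rcases eq_or_lt_of_le hXi with h | h
    · exfalso; exact him ⟨i, by simp; omega, h⟩
    · exact h
  have hnext : t < X (i + 1) := by
    rcases eq_or_lt_of_le (Nat.succ_le_of_lt hik) with h | h
    · rw [← h] at hX1; rw [hX1]; exact htI.2
    · by_contra hcon
      push_neg at hcon
      rcases eq_or_lt_of_le hcon with h2 | h2
      · exact him ⟨i + 1, by simp; omega, h2⟩
      · have : i + 1 ∈ S := by
          simp only [hS, Finset.mem_filter, Finset.mem_range]
          exact ⟨h, hcon⟩
        have := S.le_max' _ this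
        omega
  refine ⟨A i, B i, min (t - X i) (X (i + 1) - t), lt_min (by linarith) (by linarith), fun s hs => ?_⟩
  rw [abs_lt] at hs
  have m1 := min_le_left (t - X i) (X (i + 1) - t)
  have m2 := min_le_right (t - X i) (X (i + 1) - t)
  exact hpiece i hik s (by linarith [hs.1]) (by linarith [hs.2])

-- ===== slope functions =====

open Classical in
noncomputable def rS (f : Equiv.Perm I01) (t : I01) : ℝ :=
  if h : ∃ a b, rAff f t a b then h.choose else 1

open Classical in
noncomputable def lS (f : Equiv.Perm I01) (t : I01) : ℝ :=
  if h : ∃ a b, lAff f t a b then h.choose else 1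

lemma rS_eq {f : Equiv.Perm I01} {t : I01} {a b : ℝ} (ht : (t : ℝ) < 1)
    (h : rAff f t a b) : rS f t = a := by
  have hex : ∃ a b, rAff f t a b := ⟨a, b, h⟩
  rw [rS, dif_pos hex]
  obtain ⟨b', hb'⟩ := hex.choose_spec
  exact (rAff_unique ht hb' h).1

lemma lS_eq {f : Equiv.Perm I01} {t : I01} {a b : ℝ} (ht : (-1 : ℝ) < t)
    (h : lAff f t a b) : lS f t = a := by
  have hex : ∃ a b, lAff f t a b := ⟨a, b, h⟩
  rw [lS, dif_pos hex]
  obtain ⟨b', hb'⟩ := hex.choose_spec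
  exact (lAff_unique ht hb' h).1

lemma rS_spec {f : Equiv.Perm I01} (t : I01) (hpl : IsPL f) (ht : (t : ℝ) < 1) :
    ∃ b, rAff f t (rS f t) b := by
  obtain ⟨a, b, h⟩ := rAff_exists hpl t ht
  rw [rS_eq ht h]
  exact ⟨b, h⟩

lemma lS_spec {f : Equiv.Perm I01} (t : I01) (hpl : IsPL f) (ht : (-1 : ℝ) < t) :
    ∃ b, lAff f t (lS f t) b := by
  obtain ⟨a, b, h⟩ := lAff_exists hpl t ht
  rw [lS_eq ht h]
  exact ⟨b, h⟩

lemma rAff_pos {f : Equiv.Perm I01} {t : I01} {a b : ℝ}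
    (hsm : ∀ s u : I01, (s : ℝ) < u → ((f s : ℝ)) < f u) (ht : (t : ℝ) < 1)
    (h : rAff f t a b) : 0 < a := by
  obtain ⟨ε, hε, H⟩ := h
  obtain ⟨s, hs1, hs2⟩ := exists_right t ht hε
  have h1 : ((f t : ℝ)) < f s := hsm t s hs1
  rw [H t le_rfl (by linarith), H s hs1.le hs2] at h1
  nlinarith

lemma lAff_pos {f : Equiv.Perm I01} {t : I01} {a b : ℝ}
    (hsm : ∀ s u : I01, (s : ℝ) < u → ((f s : ℝ)) < f u) (ht : (-1 : ℝ) < t)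
    (h : lAff f t a b) : 0 < a := by
  obtain ⟨ε, hε, H⟩ := h
  obtain ⟨s, hs1, hs2⟩ := exists_left t ht hε
  have h1 : ((f s : ℝ)) < f t := hsm s t hs2
  rw [H t (by linarith) le_rfl, H s hs1 hs2.le] at h1
  nlinarith

-- ===== monotonicity =====

lemma strictMono_of_homeo {g : Equiv.Perm I01} (hg : IsPLHomeo g) :
    ∀ s u : I01, (s : ℝ) < u → ((g s : ℝ)) < g u := by
  classical
  set F : ℝ → ℝ := fun t => if h : t ∈ I01 then ((g ⟨t, h⟩ : I01) : ℝ) else t with hF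
  have hrestrict : Set.domRestrict I01 F = fun s : I01 => ((g s : ℝ)) := by
    funext s
    simp only [Set.domRestrict, hF, dif_pos s.2]
  have hcont : ContinuousOn F I01 := by
    rw [continuousOn_iff_continuous_restrict, hrestrict]
    exact continuous_subtype_val.comp hg.1
  have hinj : Set.InjOn F I01 := by
    intro s hs u hu he
    simp only [hF, dif_pos hs, dif_pos hu] at he
    have : g ⟨s, hs⟩ = g ⟨u, hu⟩ := Subtype.ext he
    have := g.injective this
    exact congrArg Subtype.val this
  have hend : F (-1) ≤ F 1 := by
    simp only [hF, dif_pos negOne_mem_I, dif_pos one_mem_I]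
    rw [hg.2.2.1, hg.2.2.2.1]
    norm_num
  have hsm : StrictMonoOn F (Set.Icc (-1 : ℝ) 1) :=
    ContinuousOn.strictMonoOn_of_injOn_Icc (by norm_num) hend hcont hinj
  intro s u hsu
  have := hsm s.2 u.2 hsu
  simpa only [hF, dif_pos s.2, dif_pos u.2] using this

lemma mono_of_homeo {g : Equiv.Perm I01} (hg : IsPLHomeo g) :
    ∀ s u : I01, (s : ℝ) ≤ u → ((g s : ℝ)) ≤ g u := by
  intro s u h
  rcases eq_or_lt_of_le h with h | h
  · have : s = u := Subtype.ext h
    rw [this]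
  · exact (strictMono_of_homeo hg s u h).le

-- ===== the jump function =====

noncomputable def phiR (g : Equiv.Perm I01) (t : ℝ) : ℝ :=
  if h : t ∈ I01 then Real.log (rS g ⟨t, h⟩) - Real.log (lS g ⟨t, h⟩) else 0

lemma phiR_eq_zero_of_not_bp {g : Equiv.Perm I01} {t : ℝ}
    (ht : t ∈ Set.Ioo (-1 : ℝ) 1) (h : t ∉ breakpoints g) : phiR g t = 0 := by
  have htI : t ∈ I01 := ⟨ht.1.le, ht.2.le⟩
  obtain ⟨a, b, hr, hl⟩ := reps_of_not_mem_breakpoints (t := ⟨t, htI⟩) ht h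
  rw [phiR, dif_pos htI, rS_eq ht.2 hr, lS_eq ht.1 hl, sub_self]

/-- Telescoping: the sum of the logarithmic slope jumps of `g` over the breakpoints
inside `(c,d)` equals `log (left slope at d) - log (right slope at c)`. -/
lemma sum_phiR {g : Equiv.Perm I01} (hpl : IsPL g) {c d : ℝ} (hc : c ∈ I01) (hd : d ∈ I01)
    (hcd : c < d) (T : Finset ℝ) (hT : ∀ t, t ∈ T ↔ t ∈ breakpoints g ∩ Set.Ioo c d) :
    ∑ t ∈ T, phiR g t = Real.log (lS g ⟨d, hd⟩) - Real.log (rS g ⟨c, hc⟩) := by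
  classical
  obtain ⟨k, X, A, B, hk, hmono, h0, hX1, hpiece⟩ := isPL_nat hpl
  have hmono' : ∀ i j, i ≤ j → j ≤ k → X i ≤ X j := by
    intro i j hij hjk
    rcases eq_or_lt_of_le hij with h | h
    · rw [h]
    · exact (hmono i j h hjk).le
  -- right slope on pieces
  have hA : ∀ i, i < k → ∀ (t : I01), X i ≤ t → (t : ℝ) < X (i + 1) → rS g t = A i := by
    intro i hik t h1 h2
    have ht1 : (t : ℝ) < 1 := lt_of_lt_of_le h2 (by rw [← hX1]; exact hmono' (i+1) k (by omega) le_rfl)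
    exact rS_eq ht1 ⟨X (i + 1) - t, by linarith, fun s hs1 hs2 =>
      hpiece i hik s (by linarith) (by linarith)⟩
  have hAl : ∀ i, i < k → ∀ (t : I01), X i < t → (t : ℝ) ≤ X (i + 1) → lS g t = A i := by
    intro i hik t h1 h2
    have ht1 : (-1 : ℝ) < t := lt_of_le_of_lt (by rw [← h0]; exact hmono' 0 i (by omega) (by omega)) h1
    exact lS_eq ht1 ⟨(t : ℝ) - X i, by linarith, fun s hs1 hs2 =>
      hpiece i hik s (by linarith) (by linarith)⟩
  -- grid indices
  set S1 := (Finset.range (k + 1)).filter (fun i => c < X i) with hS1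
  have hkS1 : k ∈ S1 := by
    simp only [hS1, Finset.mem_filter, Finset.mem_range]
    exact ⟨by omega, by rw [hX1]; exact lt_of_lt_of_le hcd hd.2⟩
  set i₁ := S1.min' ⟨k, hkS1⟩ with hi₁
  have hi₁S : i₁ ∈ S1 := S1.min'_mem _
  have hi₁k : i₁ ≤ k := by
    have := (Finset.mem_filter.1 hi₁S).1; simp at this; omega
  have hcX : c < X i₁ := (Finset.mem_filter.1 hi₁S).2
  have hi₁0 : i₁ ≠ 0 := by
    intro h
    rw [h, h0] at hcX
    exact absurd hcX (not_lt.2 hc.1)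
  have hXc : X (i₁ - 1) ≤ c := by
    by_contra hcon
    push_neg at hcon
    have : i₁ - 1 ∈ S1 := by
      simp only [hS1, Finset.mem_filter, Finset.mem_range]
      exact ⟨by omega, hcon⟩
    have := S1.min'_le _ this
    omega
  set S2 := (Finset.range (k + 1)).filter (fun i => X i < d) with hS2
  have h0S2 : 0 ∈ S2 := by
    simp only [hS2, Finset.mem_filter, Finset.mem_range]
    exact ⟨by omega, by rw [h0]; exact lt_of_le_of_lt hc.1 hcd⟩
  set i₂ := S2.max' ⟨0, h0S2⟩ with hi₂
  have hi₂S : i₂ ∈ S2 := S2.max'_mem _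
  have hXd : X i₂ < d := (Finset.mem_filter.1 hi₂S).2
  have hi₂k : i₂ < k := by
    have h1 : i₂ ≤ k := by
      have := (Finset.mem_filter.1 hi₂S).1; simp at this; omega
    rcases eq_or_lt_of_le h1 with h | h
    · exfalso; rw [h, hX1] at hXd; exact absurd hXd (not_lt.2 hd.2)
    · exact h
  have hdX : d ≤ X (i₂ + 1) := by
    by_contra hcon
    push_neg at hcon
    have : i₂ + 1 ∈ S2 := by
      simp only [hS2, Finset.mem_filter, Finset.mem_range]
      exact ⟨by omega, hcon⟩
    have := S2.le_max' _ this
    omega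
  have hi₁i₂ : i₁ - 1 ≤ i₂ := by
    by_contra hcon
    push_neg at hcon
    have h1 : i₂ + 1 ≤ i₁ - 1 := by omega
    have := hmono' (i₂ + 1) (i₁ - 1) h1 (by omega)
    linarith
  -- endpoint slopes
  have hrc : rS g ⟨c, hc⟩ = A (i₁ - 1) := by
    apply hA (i₁ - 1) (by omega) ⟨c, hc⟩ hXc
    rw [show i₁ - 1 + 1 = i₁ by omega]
    exact hcX
  have hld : lS g ⟨d, hd⟩ = A i₂ := hAl i₂ hi₂k ⟨d, hd⟩ hXd hdX
  -- breakpoints in (c,d) are grid points with index in [i₁, i₂]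
  have hbp_grid : ∀ t ∈ T, ∃ i, i₁ ≤ i ∧ i ≤ i₂ ∧ t = X i := by
    intro t htT
    obtain ⟨htb, htcd⟩ := (hT t).1 htT
    obtain ⟨htI, hno⟩ := htb
    -- find the piece containing t
    set S := (Finset.range k).filter (fun i => X i ≤ t) with hS
    have h0S : 0 ∈ S := by
      simp only [hS, Finset.mem_filter, Finset.mem_range]
      exact ⟨hk, by rw [h0]; linarith [htI.1]⟩
    set i := S.max' ⟨0, h0S⟩ with hi
    have hiS : i ∈ S := S.max'_mem _
    have hik : i < k := by simpa [hS] using (Finset.mem_filter.1 hiS).1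
    have hXi : X i ≤ t := (Finset.mem_filter.1 hiS).2
    have hnext : t < X (i + 1) := by
      rcases eq_or_lt_of_le (Nat.succ_le_of_lt hik) with h | h
      · have : X (i + 1) = 1 := by rw [show i + 1 = Nat.succ i from rfl, h]; exact hX1
        rw [this]; exact htI.2
      · by_contra hcon
        push_neg at hcon
        have : i + 1 ∈ S := by
          simp only [hS, Finset.mem_filter, Finset.mem_range]
          exact ⟨h, hcon⟩
        have := S.le_max' _ this
        omega
    have heq : t = X i := by
      by_contra hne
      have hXi' : X i < t := lt_of_le_of_ne hXi (fun h => hne h.symm)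
      apply hno
      refine ⟨A i, B i, min (t - X i) (X (i + 1) - t),
        lt_min (by linarith) (by linarith), fun s hs => ?_⟩
      rw [abs_lt] at hs
      have m1 := min_le_left (t - X i) (X (i + 1) - t)
      have m2 := min_le_right (t - X i) (X (i + 1) - t)
      exact hpiece i hik s (by linarith [hs.1]) (by linarith [hs.2])
    refine ⟨i, ?_, ?_, heq⟩
    · have : i ∈ S1 := by
        simp only [hS1, Finset.mem_filter, Finset.mem_range]
        exact ⟨by omega, by rw [← heq]; exact htcd.1⟩
      exact S1.min'_le _ this
    · have : i ∈ S2 := by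
        simp only [hS2, Finset.mem_filter, Finset.mem_range]
        exact ⟨by omega, by rw [← heq]; exact htcd.2⟩
      exact S2.le_max' _ this
  -- the sum over T equals the sum over the grid Finset
  have hsub : T ⊆ (Finset.Icc i₁ i₂).image X := by
    intro t htT
    obtain ⟨i, h1, h2, h3⟩ := hbp_grid t htT
    exact Finset.mem_image.2 ⟨i, Finset.mem_Icc.2 ⟨h1, h2⟩, h3.symm⟩
  have hXmem : ∀ i, i₁ ≤ i → i ≤ i₂ → X i ∈ Set.Ioo c d := by
    intro i h1 h2
    exact ⟨lt_of_lt_of_le hcX (hmono' i₁ i h1 (by omega)),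
      lt_of_le_of_lt (hmono' i i₂ h2 (by omega)) hXd⟩
  have hzero : ∀ t ∈ (Finset.Icc i₁ i₂).image X, t ∉ T → phiR g t = 0 := by
    intro t htim htT
    obtain ⟨i, hi, rfl⟩ := Finset.mem_image.1 htim
    rw [Finset.mem_Icc] at hi
    have hio := hXmem i hi.1 hi.2
    have hio' : X i ∈ Set.Ioo (-1 : ℝ) 1 :=
      ⟨lt_of_le_of_lt hc.1 hio.1, lt_of_lt_of_le hio.2 hd.2⟩
    apply phiR_eq_zero_of_not_bp hio'
    intro hbp
    exact htT ((hT _).2 ⟨hbp, hio⟩)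
  rw [Finset.sum_subset hsub hzero]
  have hXinj : Set.InjOn X ↑(Finset.Icc i₁ i₂) := by
    intro i hi j hj hij
    rw [Finset.coe_Icc, Set.mem_Icc] at hi hj
    by_contra hne
    rcases Nat.lt_or_ge i j with h | h
    · exact absurd hij (ne_of_lt (hmono i j h (by omega)))
    · have : j < i := by omega
      exact absurd hij.symm (ne_of_lt (hmono j i this (by omega)))
  rw [Finset.sum_image (fun i hi j hj h => hXinj hi hj h)]
  -- evaluate each term
  have hterm : ∀ i ∈ Finset.Icc i₁ i₂,
      phiR g (X i) = Real.log (A i) - Real.log (A (i - 1)) := by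
    intro i hi
    rw [Finset.mem_Icc] at hi
    have hio := hXmem i hi.1 hi.2
    have hio' : X i ∈ Set.Ioo (-1 : ℝ) 1 :=
      ⟨lt_of_le_of_lt hc.1 hio.1, lt_of_lt_of_le hio.2 hd.2⟩
    have hiI : X i ∈ I01 := ⟨hio'.1.le, hio'.2.le⟩
    have hi1 : 1 ≤ i := by omega
    have hik : i < k := by omega
    have hr : rS g ⟨X i, hiI⟩ = A i :=
      hA i hik ⟨X i, hiI⟩ le_rfl (hmono i (i+1) (by omega) (by omega))
    have hl : lS g ⟨X i, hiI⟩ = A (i - 1) := by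
      apply hAl (i - 1) (by omega) ⟨X i, hiI⟩
      · exact hmono (i - 1) i (by omega) (by omega)
      · rw [show i - 1 + 1 = i by omega]
    rw [phiR, dif_pos hiI, hr, hl]
  rw [Finset.sum_congr rfl hterm]
  -- telescope
  rw [hrc, hld]
  have : Finset.Icc i₁ i₂ = Finset.Ico i₁ (i₂ + 1) := by
    rw [Finset.Ico_add_one_right_eq_Icc]
  rw [this, Finset.sum_Ico_eq_sum_range]
  set ψ : ℕ → ℝ := fun j => Real.log (A (i₁ + j - 1)) with hψ
  have hterm2 : ∀ j ∈ Finset.range (i₂ + 1 - i₁),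
      Real.log (A (i₁ + j)) - Real.log (A (i₁ + j - 1)) = ψ (j + 1) - ψ j := by
    intro j _
    simp only [hψ]
    rw [show i₁ + (j + 1) - 1 = i₁ + j by omega]
  rw [Finset.sum_congr rfl hterm2, Finset.sum_range_sub ψ]
  simp only [hψ]
  rcases Nat.lt_or_ge i₂ i₁ with h | h
  · have h1 : i₂ + 1 - i₁ = 0 := by omega
    have h2 : i₂ = i₁ - 1 := by omega
    rw [h1, h2]
    simp
  · have h1 : i₁ + (i₂ + 1 - i₁) - 1 = i₂ := by omega
    have h2 : i₁ + 0 - 1 = i₁ - 1 := by omega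
    rw [h1, h2]

-- ===== interior invariance and finiteness for powers =====

lemma interior_inv {g : Equiv.Perm I01} (hg : IsPLHomeo g) (s : I01)
    (hs : (s : ℝ) ∈ Set.Ioo (-1 : ℝ) 1) : ((g s : ℝ)) ∈ Set.Ioo (-1 : ℝ) 1 := by
  have hsm := strictMono_of_homeo hg
  constructor
  · have := hsm ⟨-1, negOne_mem_I⟩ s hs.1
    rwa [hg.2.2.1] at this
  · have := hsm s ⟨1, one_mem_I⟩ hs.2
    rwa [hg.2.2.2.1] at this

lemma interior_inv_pow {g : Equiv.Perm I01} (hg : IsPLHomeo g) (s : I01)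
    (hs : (s : ℝ) ∈ Set.Ioo (-1 : ℝ) 1) (j : ℕ) :
    (((g ^ j) s : ℝ)) ∈ Set.Ioo (-1 : ℝ) 1 := by
  induction j with
  | zero => simpa using hs
  | succ j ih =>
    have : (g ^ (j + 1)) s = g ((g ^ j) s) := by
      rw [pow_succ', Equiv.Perm.mul_apply]
    rw [this]
    exact interior_inv hg _ ih

lemma bp_pow_finite {g : Equiv.Perm I01} (hg : IsPLHomeo g) (n : ℕ) :
    (breakpoints (g ^ n)).Finite := by
  have hpl := hg.2.2.2.2
  have hB := breakpoints_finite hpl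
  have hmono := mono_of_homeo hg
  have hfin : ∀ j : ℕ, (Subtype.val '' ((fun s : I01 => (g ^ j) s) ⁻¹'
      (Subtype.val ⁻¹' breakpoints g))).Finite := by
    intro j
    apply Set.Finite.image
    apply Set.Finite.preimage ((g ^ j).injective.injOn)
    exact Set.Finite.preimage (Subtype.val_injective.injOn) hB
  apply Set.Finite.subset (Set.Finite.biUnion (Set.finite_Iio n)
    (fun j _ => hfin j))
  intro t ht
  obtain ⟨htI, -⟩ := id ht
  by_contra hmem
  simp only [Set.mem_iUnion, Set.mem_image, Set.mem_preimage, not_exists, not_and] at hmem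
  have htIcc : t ∈ I01 := ⟨htI.1.le, htI.2.le⟩
  have hnb : ∀ j, j < n → (((g ^ j) ⟨t, htIcc⟩ : ℝ)) ∉ breakpoints g := by
    intro j hj hb
    exact hmem j hj ⟨t, htIcc⟩ hb rfl
  have hio : ∀ j : ℕ, (((g ^ j) ⟨t, htIcc⟩ : ℝ)) ∈ Set.Ioo (-1 : ℝ) 1 :=
    interior_inv_pow hg _ htI
  have hreps : ∀ j : ℕ, ∃ a b, j < n →
      rAff g ((g ^ j) ⟨t, htIcc⟩) a b ∧ lAff g ((g ^ j) ⟨t, htIcc⟩) a b := by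
    intro j
    by_cases hj : j < n
    · obtain ⟨a, b, h1, h2⟩ := reps_of_not_mem_breakpoints (hio j) (hnb j hj)
      exact ⟨a, b, fun _ => ⟨h1, h2⟩⟩
    · exact ⟨0, 0, fun h => absurd h hj⟩
  choose A Bf hAB using hreps
  obtain ⟨b1, hb1⟩ := rAff_pow hmono n A ⟨t, htIcc⟩ (fun j hj => ⟨Bf j, (hAB j hj).1⟩)
  obtain ⟨b2, hb2⟩ := lAff_pow hmono n A ⟨t, htIcc⟩ (fun j hj => ⟨Bf j, (hAB j hj).2⟩)
  exact (not_mem_breakpoints hb1 hb2 rfl) ht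

-- ===== the fixed-point-free interval =====

lemma exists_cd {g : Equiv.Perm I01} (hg : IsPLHomeo g) (hne : g ≠ 1) :
    ∃ (c d : ℝ) (hc : c ∈ I01) (hd : d ∈ I01), c < d ∧
      ((g ⟨c, hc⟩ : ℝ)) = c ∧ ((g ⟨d, hd⟩ : ℝ)) = d ∧
      ((∀ s : I01, c < s → (s : ℝ) < d → (s : ℝ) < g s) ∨
       (∀ s : I01, c < s → (s : ℝ) < d → ((g s : ℝ)) < s)) := by
  classical
  -- a point that is not fixed
  have : ∃ u : I01, g u ≠ u := by
    by_contra h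
    push_neg at h
    exact hne (Equiv.ext h)
  obtain ⟨u, hu⟩ := this
  set F : ℝ → ℝ := fun t => if h : t ∈ I01 then ((g ⟨t, h⟩ : I01) : ℝ) else t with hF
  have hFval : ∀ (t : ℝ) (h : t ∈ I01), F t = ((g ⟨t, h⟩ : I01) : ℝ) := by
    intro t h
    simp only [hF, dif_pos h]
  have hrestrict : Set.domRestrict I01 F = fun s : I01 => ((g s : ℝ)) := by
    funext s
    simp only [Set.domRestrict, hF, dif_pos s.2]
  have hcont : ContinuousOn F I01 := by
    rw [continuousOn_iff_continuous_restrict, hrestrict]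
    exact continuous_subtype_val.comp hg.1
  have hFu : F (u : ℝ) ≠ u := by
    rw [hFval u u.2]
    intro h
    exact hu (Subtype.ext (by simpa [Subtype.coe_eta] using h))
  set Fix : Set ℝ := I01 ∩ {t | F t - t = 0} with hFix
  have hFixClosed : IsClosed Fix :=
    ContinuousOn.preimage_isClosed_of_isClosed (hcont.sub continuousOn_id)
      isClosed_Icc isClosed_singleton
  have hm1 : (-1 : ℝ) ∈ Fix := by
    refine ⟨negOne_mem_I, ?_⟩
    have := hFval (-1) negOne_mem_I
    rw [hg.2.2.1] at this
    simp only [Set.mem_setOf_eq, this, sub_self]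
  have hp1 : (1 : ℝ) ∈ Fix := by
    refine ⟨one_mem_I, ?_⟩
    have := hFval 1 one_mem_I
    rw [hg.2.2.2.1] at this
    simp only [Set.mem_setOf_eq, this, sub_self]
  set K1 : Set ℝ := Fix ∩ Set.Iic (u : ℝ) with hK1
  have hK1c : IsClosed K1 := hFixClosed.inter isClosed_Iic
  have hK1ne : K1.Nonempty := ⟨-1, hm1, u.2.1⟩
  have hK1bdd : BddAbove K1 := ⟨u, fun t ht => ht.2⟩
  set c := sSup K1 with hc'
  have hcK : c ∈ K1 := hK1c.csSup_mem hK1ne hK1bdd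
  have hcI : c ∈ I01 := hcK.1.1
  have hcfix : F c = c := by
    have h := hcK.1.2
    simp only [Set.mem_setOf_eq] at h
    linarith
  have hcu : c < u := by
    have hcle : c ≤ (u : ℝ) := hcK.2
    rcases eq_or_lt_of_le hcle with h | h
    · exfalso; apply hFu; rw [← h]; exact hcfix
    · exact h
  set K2 : Set ℝ := Fix ∩ Set.Ici (u : ℝ) with hK2
  have hK2c : IsClosed K2 := hFixClosed.inter isClosed_Ici
  have hK2ne : K2.Nonempty := ⟨1, hp1, u.2.2⟩
  have hK2bdd : BddBelow K2 := ⟨u, fun t ht => ht.2⟩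
  set d := sInf K2 with hd'
  have hdK : d ∈ K2 := hK2c.csInf_mem hK2ne hK2bdd
  have hdI : d ∈ I01 := hdK.1.1
  have hdfix : F d = d := by
    have h := hdK.1.2
    simp only [Set.mem_setOf_eq] at h
    linarith
  have hud : (u : ℝ) < d := by
    have hdle : (u : ℝ) ≤ d := hdK.2
    rcases eq_or_lt_of_le hdle with h | h
    · exfalso; apply hFu; rw [h]; exact hdfix
    · exact h
  -- no fixed points inside (c, d)
  have hnofix : ∀ t, c < t → t < d → t ∈ I01 → F t ≠ t := by
    intro t h1 h2 htI heq
    rcases le_total t (u : ℝ) with h | h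
    · have : t ∈ K1 := ⟨⟨htI, by simp [heq]⟩, h⟩
      have := le_csSup hK1bdd this
      linarith
    · have : t ∈ K2 := ⟨⟨htI, by simp [heq]⟩, h⟩
      have := csInf_le hK2bdd this
      linarith
  have hsubI : ∀ t, c < t → t < d → t ∈ I01 := by
    intro t h1 h2
    exact ⟨le_trans hcI.1 h1.le, le_trans h2.le hdI.2⟩
  -- sign dichotomy
  have hdichot : (∀ t, c < t → t < d → t < F t) ∨ (∀ t, c < t → t < d → F t < t) := by
    by_cases hpos : ∀ t, c < t → t < d → t < F t
    · exact Or.inl hpos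
    · right
      push_neg at hpos
      obtain ⟨t₀, ht₀1, ht₀2, ht₀3⟩ := hpos
      have ht₀ : F t₀ < t₀ := by
        rcases eq_or_lt_of_le ht₀3 with h | h
        · exact absurd h (hnofix t₀ ht₀1 ht₀2 (hsubI t₀ ht₀1 ht₀2))

        · exact h
      intro t ht1 ht2
      by_contra hcon
      push_neg at hcon
      have ht' : t < F t := by
        rcases eq_or_lt_of_le hcon with h | h
        · exact absurd h.symm (hnofix t ht1 ht2 (hsubI t ht1 ht2))
        · exact h
      -- IVT gives a fixed point between t and t₀
      have hne' : t ≠ t₀ := by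
        intro h
        rw [h] at ht'
        linarith
      set H : ℝ → ℝ := fun s => F s - s with hH
      have hHcont : ∀ p q : ℝ, c < p → q < d → p ≤ q → ContinuousOn H (Set.Icc p q) := by
        intro p q hp hq hpq
        apply ContinuousOn.sub (hcont.mono ?_) continuousOn_id
        intro s hs
        exact hsubI s (lt_of_lt_of_le hp hs.1) (lt_of_le_of_lt hs.2 hq)
      rcases lt_or_gt_of_ne hne' with h | h
      · -- t < t₀, H t > 0, H t₀ < 0
        have := intermediate_value_Icc' h.le (hHcont t t₀ ht1 ht₀2 h.le)
        have h0 : (0 : ℝ) ∈ Set.Icc (H t₀) (H t) := by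
          simp only [Set.mem_Icc, hH]
          constructor <;> linarith
        obtain ⟨s, hs, hHs⟩ := this h0
        have : F s = s := by simp [hH] at hHs; linarith
        exact hnofix s (lt_of_lt_of_le ht1 hs.1) (lt_of_le_of_lt hs.2 ht₀2)
          (hsubI s (lt_of_lt_of_le ht1 hs.1) (lt_of_le_of_lt hs.2 ht₀2)) this
      · -- t₀ < t, H t₀ < 0, H t > 0
        have := intermediate_value_Icc h.le (hHcont t₀ t ht₀1 ht2 h.le)
        have h0 : (0 : ℝ) ∈ Set.Icc (H t₀) (H t) := by
          simp only [Set.mem_Icc, hH]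
          constructor <;> linarith
        obtain ⟨s, hs, hHs⟩ := this h0
        have : F s = s := by simp [hH] at hHs; linarith
        exact hnofix s (lt_of_lt_of_le ht₀1 hs.1) (lt_of_le_of_lt hs.2 ht2)
          (hsubI s (lt_of_lt_of_le ht₀1 hs.1) (lt_of_le_of_lt hs.2 ht2)) this
  refine ⟨c, d, hcI, hdI, lt_trans hcu hud, ?_, ?_, ?_⟩
  · rw [← hFval c hcI]; exact hcfix
  · rw [← hFval d hdI]; exact hdfix
  · rcases hdichot with h | h
    · left
      intro s hs1 hs2
      have := h s hs1 hs2
      rwa [hFval s s.2, Subtype.coe_eta] at this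
    · right
      intro s hs1 hs2
      have := h s hs1 hs2
      rwa [hFval s s.2, Subtype.coe_eta] at this

-- ===== orbit lemmas =====

lemma orbit_fwd {g : Equiv.Perm I01} (hg : IsPLHomeo g) {c d : ℝ} (hc : c ∈ I01) (hd : d ∈ I01)
    (hgc : ((g ⟨c, hc⟩ : ℝ)) = c) (hgd : ((g ⟨d, hd⟩ : ℝ)) = d)
    (s : I01) (h1 : c < s) (h2 : (s : ℝ) < d) : c < ((g s : ℝ)) ∧ ((g s : ℝ)) < d := by
  have hsm := strictMono_of_homeo hg
  constructor
  · have := hsm ⟨c, hc⟩ s h1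
    rwa [hgc] at this
  · have := hsm s ⟨d, hd⟩ h2
    rwa [hgd] at this

lemma orbit_bwd {g : Equiv.Perm I01} (hg : IsPLHomeo g) {c d : ℝ} (hc : c ∈ I01) (hd : d ∈ I01)
    (hgc : ((g ⟨c, hc⟩ : ℝ)) = c) (hgd : ((g ⟨d, hd⟩ : ℝ)) = d)
    (s : I01) (h1 : c < s) (h2 : (s : ℝ) < d) :
    c < ((g⁻¹ s : ℝ)) ∧ ((g⁻¹ s : ℝ)) < d := by
  have hmono := mono_of_homeo hg
  constructor
  · by_contra hcon
    push_neg at hcon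
    have := hmono (g⁻¹ s) ⟨c, hc⟩ hcon
    rw [hgc] at this
    have he : g (g⁻¹ s) = s := Equiv.apply_symm_apply g s
    rw [he] at this
    linarith
  · by_contra hcon
    push_neg at hcon
    have := hmono ⟨d, hd⟩ (g⁻¹ s) hcon
    rw [hgd] at this
    have he : g (g⁻¹ s) = s := Equiv.apply_symm_apply g s
    rw [he] at this
    linarith

lemma orbit_step {g : Equiv.Perm I01} (z : I01) (i : ℤ) :
    g ((g ^ i) z) = (g ^ (i + 1)) z := by
  have : g ^ (i + 1) = g * g ^ i := by
    rw [add_comm, zpow_add, zpow_one]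
  rw [this, Equiv.Perm.mul_apply]

lemma orbit_step_inv {g : Equiv.Perm I01} (z : I01) (i : ℤ) :
    g⁻¹ ((g ^ i) z) = (g ^ (i - 1)) z := by
  have h := orbit_step (g := g) z (i - 1)
  rw [sub_add_cancel] at h
  rw [← h, ← Equiv.Perm.mul_apply, inv_mul_cancel, Equiv.Perm.one_apply]

lemma orbit_mem {g : Equiv.Perm I01} (hg : IsPLHomeo g) {c d : ℝ} (hc : c ∈ I01) (hd : d ∈ I01)
    (hgc : ((g ⟨c, hc⟩ : ℝ)) = c) (hgd : ((g ⟨d, hd⟩ : ℝ)) = d)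
    (z : I01) (hz1 : c < z) (hz2 : (z : ℝ) < d) (i : ℤ) :
    c < (((g ^ i) z : ℝ)) ∧ (((g ^ i) z : ℝ)) < d := by
  induction i using Int.induction_on with
  | zero => simpa using ⟨hz1, hz2⟩
  | succ i ih =>
    rw [← orbit_step]
    exact orbit_fwd hg hc hd hgc hgd _ ih.1 ih.2
  | pred i ih =>
    rw [← orbit_step_inv]
    exact orbit_bwd hg hc hd hgc hgd _ ih.1 ih.2

lemma orbit_shift {g : Equiv.Perm I01} (z : I01) (k : ℤ) (j : ℕ) :
    (g ^ j) ((g ^ k) z) = (g ^ (k + j)) z := by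
  induction j with
  | zero => simp
  | succ j ih =>
    rw [pow_succ', Equiv.Perm.mul_apply, ih, orbit_step]
    congr 1
    push_cast
    ring_nf

-- ===== orbit relation =====

def Rel (g : Equiv.Perm I01) (z t : ℝ) : Prop :=
  ∃ (i : ℤ) (h : z ∈ I01), (((g ^ i) ⟨z, h⟩ : I01) : ℝ) = t

lemma rel_refl {g : Equiv.Perm I01} {z : ℝ} (h : z ∈ I01) : Rel g z z := ⟨0, h, rfl⟩

lemma rel_symm {g : Equiv.Perm I01} {z t : ℝ} (h : Rel g z t) : Rel g t z := by
  obtain ⟨i, hz, he⟩ := h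
  have ht : t ∈ I01 := he ▸ ((g ^ i) ⟨z, hz⟩).2
  refine ⟨-i, ht, ?_⟩
  have : (⟨t, ht⟩ : I01) = (g ^ i) ⟨z, hz⟩ := Subtype.ext he.symm
  rw [this, zpow_neg, ← Equiv.Perm.mul_apply, inv_mul_cancel, Equiv.Perm.one_apply]

lemma rel_trans {g : Equiv.Perm I01} {z t u : ℝ} (h1 : Rel g z t) (h2 : Rel g t u) :
    Rel g z u := by
  obtain ⟨i, hz, he⟩ := h1
  obtain ⟨j, ht, he2⟩ := h2
  refine ⟨j + i, hz, ?_⟩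
  have : (⟨t, ht⟩ : I01) = (g ^ i) ⟨z, hz⟩ := Subtype.ext he.symm
  rw [zpow_add, Equiv.Perm.mul_apply, ← this, he2]

open Classical in
lemma exists_orbit_class {g : Equiv.Perm I01} (T : Finset ℝ) (hTI : ∀ t ∈ T, t ∈ I01)
    (hsum : ∑ t ∈ T, phiR g t ≠ 0) :
    ∃ z ∈ T, ∑ t ∈ T.filter (fun t => Rel g z t), phiR g t ≠ 0 := by
  classical
  set rep : ℝ → ℝ := fun t =>
    if h : (T.filter (fun s => Rel g t s)).Nonempty then (T.filter (fun s => Rel g t s)).min' h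
    else t with hrep
  have key1 : ∀ t ∈ T, t ∈ T.filter (fun s => Rel g t s) := by
    intro t ht
    exact Finset.mem_filter.2 ⟨ht, rel_refl (hTI t ht)⟩
  have key3 : ∀ t ∈ T, Rel g t (rep t) ∧ rep t ∈ T := by
    intro t ht
    have hne : (T.filter (fun s => Rel g t s)).Nonempty := ⟨t, key1 t ht⟩
    have := Finset.min'_mem _ hne
    rw [Finset.mem_filter] at this
    simp only [hrep, dif_pos hne]
    exact ⟨this.2, this.1⟩
  have key2 : ∀ t ∈ T, ∀ s ∈ T, Rel g t s → rep t = rep s := by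
    intro t ht s hs hrel
    have hfeq : T.filter (fun u => Rel g t u) = T.filter (fun u => Rel g s u) := by
      ext u
      simp only [Finset.mem_filter, and_congr_right_iff]
      intro _
      exact ⟨fun h => rel_trans (rel_symm hrel) h, fun h => rel_trans hrel h⟩
    have hne2 : (T.filter (fun u => Rel g s u)).Nonempty := ⟨s, key1 s hs⟩
    simp only [hrep, hfeq, dif_pos hne2]
  by_contra hall
  push_neg at hall
  apply hsum
  rw [← Finset.sum_fiberwise_of_maps_to (g := rep) (fun t ht => (key3 t ht).2) (phiR g)]
  apply Finset.sum_eq_zero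
  intro y hy
  by_cases hfe : (T.filter (fun t => rep t = y)).Nonempty
  · obtain ⟨t₀, ht₀⟩ := hfe
    rw [Finset.mem_filter] at ht₀
    have hyfix : rep y = y := by
      have h1 : Rel g t₀ y := by
        have := (key3 t₀ ht₀.1).1
        rwa [ht₀.2] at this
      have := key2 t₀ ht₀.1 y hy h1
      rw [ht₀.2] at this
      exact this.symm
    have hclass : T.filter (fun t => rep t = y) = T.filter (fun t => Rel g y t) := by
      ext u
      simp only [Finset.mem_filter, and_congr_right_iff]
      intro hu
      constructor
      · intro h
        have := (key3 u hu).1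
        rw [h] at this
        exact rel_symm this
      · intro h
        have := key2 y hy u hu h
        rw [hyfix] at this
        exact this.symm
    rw [hclass]
    exact hall y hy
  · rw [Finset.not_nonempty_iff_eq_empty] at hfe
    rw [hfe, Finset.sum_empty]

-- ===== integer windows =====

lemma int_window {n : ℕ} (hn : 0 < n) (r m y : ℤ) :
    (m - r) / (n : ℤ) = y ↔ r + n * y ≤ m ∧ m < r + n * y + n := by
  have hn' : (0 : ℤ) < n := by exact_mod_cast hn
  constructor
  · intro h
    have h1 := Int.mul_ediv_add_emod (m - r) n
    have h2 := Int.emod_nonneg (m - r) (by positivity : (n : ℤ) ≠ 0)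
    have h3 := Int.emod_lt_of_pos (m - r) hn'
    rw [h] at h1
    constructor <;> linarith
  · rintro ⟨h1, h2⟩
    have l1 : y ≤ (m - r) / (n : ℤ) := (Int.le_ediv_iff_mul_le hn').mpr (by linarith)
    have l2 : (m - r) / (n : ℤ) < y + 1 := by
      have := Int.ediv_le_ediv hn' (by linarith : m - r ≤ n * y + n - 1)
      have heq : ((n : ℤ) * y + n - 1) / (n : ℤ) = y := by
        rw [show (n : ℤ) * y + n - 1 = (n - 1) + y * n by ring,
          Int.add_mul_ediv_right _ _ (by positivity : (n : ℤ) ≠ 0),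
          Int.ediv_eq_zero_of_lt (by linarith) (by linarith)]
        omega
      omega
    omega

-- ===== window selection =====

open Classical in
lemma exists_window {g : Equiv.Perm I01} (hg : IsPLHomeo g) {c d z : ℝ}
    (hc : c ∈ I01) (hd : d ∈ I01)
    (hgc : ((g ⟨c, hc⟩ : ℝ)) = c) (hgd : ((g ⟨d, hd⟩ : ℝ)) = d)
    (hzI : z ∈ I01) (hz1 : c < z) (hz2 : z < d)
    (hζinj : Function.Injective (fun i : ℤ => (((g ^ i) (⟨z, hzI⟩ : I01) : I01) : ℝ)))
    {n : ℕ} (hn : 0 < n)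
    (T : Finset ℝ) (hT : ∀ t, t ∈ T ↔ t ∈ breakpoints g ∩ Set.Ioo c d)
    (hclass : ∑ t ∈ T.filter (fun t => Rel g z t), phiR g t ≠ 0) (r : ℕ) :
    ∃ y : ℤ, ∑ j ∈ Finset.range n,
      phiR g (((g ^ ((r : ℤ) + n * y + j)) (⟨z, hzI⟩ : I01) : I01) : ℝ) ≠ 0 := by
  set ζ : ℤ → I01 := fun i => (g ^ i) (⟨z, hzI⟩ : I01) with hζdef
  have hζmem : ∀ i : ℤ, c < ((ζ i : ℝ)) ∧ ((ζ i : ℝ)) < d :=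
    orbit_mem hg hc hd hgc hgd _ hz1 hz2
  have hζIoo : ∀ i : ℤ, ((ζ i : ℝ)) ∈ Set.Ioo (-1 : ℝ) 1 := fun i =>
    ⟨lt_of_le_of_lt hc.1 (hζmem i).1, lt_of_lt_of_le (hζmem i).2 hd.2⟩
  by_contra hcon
  push_neg at hcon
  apply hclass
  set C := T.filter (fun t => Rel g z t) with hC
  -- index function
  set idxT : ℝ → ℤ := fun t => if h : ∃ i : ℤ, ((ζ i : ℝ)) = t then h.choose else 0 with hidxT
  have hidx : ∀ t, (∃ i : ℤ, ((ζ i : ℝ)) = t) → ((ζ (idxT t) : ℝ)) = t := by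
    intro t h
    simp only [hidxT, dif_pos h]
    exact h.choose_spec
  have hCidx : ∀ t ∈ C, ((ζ (idxT t) : ℝ)) = t := by
    intro t ht
    apply hidx
    rw [hC, Finset.mem_filter] at ht
    obtain ⟨i, h, he⟩ := ht.2
    exact ⟨i, he⟩
  set w : ℝ → ℤ := fun t => (idxT t - r) / n with hw
  rw [← Finset.sum_fiberwise_of_maps_to
    (g := w) (fun t ht => Finset.mem_image_of_mem w ht) (phiR g)]
  apply Finset.sum_eq_zero
  intro y hy
  set k : ℤ := (r : ℤ) + n * y with hk
  set W : Finset ℝ := (Finset.range n).image (fun j : ℕ => ((ζ (k + (j : ℤ)) : ℝ))) with hW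
  have hsub : C.filter (fun t => w t = y) ⊆ W := by
    intro t ht
    rw [Finset.mem_filter] at ht
    obtain ⟨htC, hwt⟩ := ht
    have hidxt := hCidx t htC
    have hbounds := (int_window hn r (idxT t) y).1 hwt
    have hj0 : 0 ≤ idxT t - k := by omega
    refine Finset.mem_image.2 ⟨(idxT t - k).toNat, Finset.mem_range.2 (by omega), ?_⟩
    rw [Int.toNat_of_nonneg hj0, show k + (idxT t - k) = idxT t by ring]
    exact hidxt
  have hzero : ∀ t ∈ W, t ∉ C.filter (fun t => w t = y) → phiR g t = 0 := by
    intro t htW htf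
    obtain ⟨j, hj, rfl⟩ := Finset.mem_image.1 htW
    rw [Finset.mem_range] at hj
    by_cases htC : ((ζ (k + j) : ℝ)) ∈ C
    · exfalso
      apply htf
      rw [Finset.mem_filter]
      refine ⟨htC, ?_⟩
      have h1 : ((ζ (idxT ((ζ (k + j) : ℝ))) : ℝ)) = ((ζ (k + j) : ℝ)) :=
        hidx _ ⟨k + j, rfl⟩
      have h2 : idxT ((ζ (k + j) : ℝ)) = k + j := hζinj h1
      rw [hw]
      simp only
      rw [h2]
      exact (int_window hn r (k + j) y).2 (by constructor <;> omega)
    · apply phiR_eq_zero_of_not_bp (hζIoo (k + j))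
      intro hbp
      apply htC
      rw [hC, Finset.mem_filter]
      exact ⟨(hT _).2 ⟨hbp, hζmem (k + j)⟩, ⟨k + j, hzI, rfl⟩⟩
  rw [Finset.sum_subset hsub hzero]
  have hinj2 : ∀ j1 ∈ Finset.range n, ∀ j2 ∈ Finset.range n,
      ((ζ (k + j1) : ℝ)) = ((ζ (k + j2) : ℝ)) → j1 = j2 := by
    intro j1 _ j2 _ he
    have := hζinj he
    omega
  rw [Finset.sum_image hinj2]
  have := hcon y
  rw [← hk] at this
  exact this

/-- If `g ∈ PL(I,∂I)` is not the identity, then `g^n` has at least `n - 1` breakpoints;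
equivalently `Δ(gⁿ) ≥ n`. -/
theorem delta_pow_ge (g : Equiv.Perm (Set.Icc (-1 : ℝ) 1)) (hg : Stmt.IsPLHomeo g)
    (hne : g ≠ 1) (n : ℕ) (hn : 0 < n) : n ≤ Stmt.Δ (g ^ n) := by
  classical
  have hpl : IsPL g := hg.2.2.2.2
  have hmono := mono_of_homeo hg
  have hsm := strictMono_of_homeo hg
  obtain ⟨c, d, hc, hd, hcd, hgc, hgd, hsign⟩ := exists_cd hg hne
  have hc1 : c < 1 := lt_of_lt_of_le hcd hd.2
  have hd1 : (-1 : ℝ) < d := lt_of_le_of_lt hc.1 hcd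
  obtain ⟨bc, hbc⟩ := rS_spec (⟨c, hc⟩ : I01) hpl hc1
  obtain ⟨bd, hbd⟩ := lS_spec (⟨d, hd⟩ : I01) hpl hd1
  have hmc_pos : 0 < rS g ⟨c, hc⟩ := rAff_pos hsm hc1 hbc
  have hld_pos : 0 < lS g ⟨d, hd⟩ := lAff_pos hsm hd1 hbd
  have hvc : c = rS g ⟨c, hc⟩ * c + bc := by
    have h := rAff_val hbc
    rw [hgc] at h
    exact h
  have hvd : d = lS g ⟨d, hd⟩ * d + bd := by
    have h := lAff_val hbd
    rw [hgd] at h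
    exact h
  -- test points near c and d
  obtain ⟨ε, hε, H⟩ := id hbc
  obtain ⟨ε', hε', H'⟩ := id hbd
  set sr : ℝ := min (c + ε / 2) ((c + d) / 2) with hsr
  have hsr1 : c < sr := lt_min (by linarith) (by linarith)
  have hsr2 : sr < d := lt_of_le_of_lt (min_le_right _ _) (by linarith)
  have hsr3 : sr < c + ε := lt_of_le_of_lt (min_le_left _ _) (by linarith)
  have hsrI : sr ∈ I01 := ⟨le_trans hc.1 hsr1.le, le_trans hsr2.le hd.2⟩
  have hgsr : ((g ⟨sr, hsrI⟩ : ℝ)) = rS g ⟨c, hc⟩ * sr + bc := H ⟨sr, hsrI⟩ hsr1.le hsr3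
  set sl : ℝ := max (d - ε' / 2) ((c + d) / 2) with hsl
  have hsl1 : sl < d := max_lt (by linarith) (by linarith)
  have hsl2 : c < sl := lt_of_lt_of_le (by linarith) (le_max_right _ _)
  have hsl3 : d - ε' < sl := lt_of_lt_of_le (by linarith) (le_max_left _ _)
  have hslI : sl ∈ I01 := ⟨le_trans hc.1 hsl2.le, le_trans hsl1.le hd.2⟩
  have hgsl : ((g ⟨sl, hslI⟩ : ℝ)) = lS g ⟨d, hd⟩ * sl + bd := H' ⟨sl, hslI⟩ hsl3 hsl1.le
  have hlogne : Real.log (lS g ⟨d, hd⟩) - Real.log (rS g ⟨c, hc⟩) ≠ 0 := by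
    rcases hsign with hpos | hneg
    · have h1 : sr < ((g ⟨sr, hsrI⟩ : ℝ)) := hpos ⟨sr, hsrI⟩ hsr1 hsr2
      have hMC : 1 < rS g ⟨c, hc⟩ := by
        rw [hgsr] at h1
        nlinarith
      have h2 : sl < ((g ⟨sl, hslI⟩ : ℝ)) := hpos ⟨sl, hslI⟩ hsl2 hsl1
      have hLD : lS g ⟨d, hd⟩ < 1 := by
        rw [hgsl] at h2
        nlinarith
      have := Real.log_neg hld_pos hLD
      have := Real.log_pos hMC
      linarith
    · have h1 : ((g ⟨sr, hsrI⟩ : ℝ)) < sr := hneg ⟨sr, hsrI⟩ hsr1 hsr2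
      have hMC : rS g ⟨c, hc⟩ < 1 := by
        rw [hgsr] at h1
        nlinarith
      have h2 : ((g ⟨sl, hslI⟩ : ℝ)) < sl := hneg ⟨sl, hslI⟩ hsl2 hsl1
      have hLD : 1 < lS g ⟨d, hd⟩ := by
        rw [hgsl] at h2
        nlinarith
      have := Real.log_neg hmc_pos hMC
      have := Real.log_pos hLD
      linarith
  -- the breakpoints of g in (c,d)
  have hTfin : (breakpoints g ∩ Set.Ioo c d).Finite :=
    Set.Finite.subset (breakpoints_finite hpl) Set.inter_subset_left
  set T : Finset ℝ := hTfin.toFinset with hTdef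
  have hT : ∀ t, t ∈ T ↔ t ∈ breakpoints g ∩ Set.Ioo c d := fun t => hTfin.mem_toFinset
  have hsum : ∑ t ∈ T, phiR g t ≠ 0 := by
    rw [sum_phiR hpl hc hd hcd T hT]
    exact hlogne
  have hTI : ∀ t ∈ T, t ∈ I01 := by
    intro t ht
    have := ((hT t).1 ht).1.1
    exact ⟨this.1.le, this.2.le⟩
  obtain ⟨z, hzT, hclass⟩ := exists_orbit_class T hTI hsum
  have hzmem := (hT z).1 hzT
  have hzI : z ∈ I01 := hTI z hzT
  have hz1 : c < z := hzmem.2.1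
  have hz2 : z < d := hzmem.2.2
  have hζmem : ∀ i : ℤ, c < (((g ^ i) (⟨z, hzI⟩ : I01) : I01) : ℝ) ∧
      (((g ^ i) (⟨z, hzI⟩ : I01) : I01) : ℝ) < d :=
    orbit_mem hg hc hd hgc hgd _ hz1 hz2
  have hζIoo : ∀ i : ℤ, (((g ^ i) (⟨z, hzI⟩ : I01) : I01) : ℝ) ∈ Set.Ioo (-1 : ℝ) 1 := fun i =>
    ⟨lt_of_le_of_lt hc.1 (hζmem i).1, lt_of_lt_of_le (hζmem i).2 hd.2⟩
  have hζinj : Function.Injective (fun i : ℤ => (((g ^ i) (⟨z, hzI⟩ : I01) : I01) : ℝ)) := by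
    rcases hsign with hpos | hneg
    · apply (strictMono_int_of_lt_succ (f := fun i : ℤ =>
        (((g ^ i) (⟨z, hzI⟩ : I01) : I01) : ℝ)) (fun i => ?_)).injective
      rw [← orbit_step]
      exact hpos _ (hζmem i).1 (hζmem i).2
    · apply (strictAnti_int_of_succ_lt (f := fun i : ℤ =>
        (((g ^ i) (⟨z, hzI⟩ : I01) : I01) : ℝ)) (fun i => ?_)).injective
      rw [← orbit_step]
      exact hneg _ (hζmem i).1 (hζmem i).2
  have hwin := fun r : ℕ =>
    exists_window hg hc hd hgc hgd hzI hz1 hz2 hζinj hn T hT hclass r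
  choose Y hY using hwin
  -- each selected orbit point is a breakpoint of g ^ n
  have hbp : ∀ r : ℕ,
      (((g ^ ((r : ℤ) + n * Y r)) (⟨z, hzI⟩ : I01) : I01) : ℝ) ∈ breakpoints (g ^ n) := by
    intro r
    set p : I01 := (g ^ ((r : ℤ) + n * Y r)) (⟨z, hzI⟩ : I01) with hp
    have hporb : ∀ j : ℕ, (g ^ j) p = (g ^ ((r : ℤ) + n * Y r + j)) (⟨z, hzI⟩ : I01) :=
      fun j => orbit_shift _ _ j
    set A : ℕ → ℝ := fun j => rS g ((g ^ ((r : ℤ) + n * Y r + j)) (⟨z, hzI⟩ : I01)) with hA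
    set A' : ℕ → ℝ := fun j => lS g ((g ^ ((r : ℤ) + n * Y r + j)) (⟨z, hzI⟩ : I01)) with hA'
    obtain ⟨b1, h1⟩ := rAff_pow hmono n A p (fun j hj => by
      rw [hporb j]
      exact rS_spec _ hpl (hζIoo _).2)
    obtain ⟨b2, h2⟩ := lAff_pow hmono n A' p (fun j hj => by
      rw [hporb j]
      exact lS_spec _ hpl (hζIoo _).1)
    have hApos : ∀ j ∈ Finset.range n, A j ≠ 0 := by
      intro j _
      obtain ⟨b, hb⟩ := rS_spec ((g ^ ((r : ℤ) + n * Y r + j)) (⟨z, hzI⟩ : I01)) hpl (hζIoo _).2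
      exact (rAff_pos hsm (hζIoo _).2 hb).ne'
    have hA'pos : ∀ j ∈ Finset.range n, A' j ≠ 0 := by
      intro j _
      obtain ⟨b, hb⟩ := lS_spec ((g ^ ((r : ℤ) + n * Y r + j)) (⟨z, hzI⟩ : I01)) hpl (hζIoo _).1
      exact (lAff_pos hsm (hζIoo _).1 hb).ne'
    have hne' : (∏ j ∈ Finset.range n, A j) ≠ ∏ j ∈ Finset.range n, A' j := by
      intro he
      apply hY r
      have hterm : ∀ j ∈ Finset.range n,
          phiR g (((g ^ ((r : ℤ) + n * Y r + j)) (⟨z, hzI⟩ : I01) : I01) : ℝ)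
          = Real.log (A j) - Real.log (A' j) := by
        intro j _
        have hmem : (((g ^ ((r : ℤ) + n * Y r + j)) (⟨z, hzI⟩ : I01) : I01) : ℝ) ∈ I01 :=
          ((g ^ ((r : ℤ) + n * Y r + j)) (⟨z, hzI⟩ : I01)).2
        rw [phiR, dif_pos hmem]
      rw [Finset.sum_congr rfl hterm, Finset.sum_sub_distrib,
        ← Real.log_prod hApos, ← Real.log_prod hA'pos, he, sub_self]
    exact mem_breakpoints (hζIoo _) h1 h2 hne'
  -- count the distinct breakpoints
  set S : Finset ℝ := (Finset.range n).image
    (fun r : ℕ => (((g ^ ((r : ℤ) + n * Y r)) (⟨z, hzI⟩ : I01) : I01) : ℝ)) with hS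
  have hinj3 : ∀ r1 ∈ Finset.range n, ∀ r2 ∈ Finset.range n,
      (((g ^ ((r1 : ℤ) + n * Y r1)) (⟨z, hzI⟩ : I01) : I01) : ℝ)
      = (((g ^ ((r2 : ℤ) + n * Y r2)) (⟨z, hzI⟩ : I01) : I01) : ℝ) → r1 = r2 := by
    intro r1 hr1 r2 hr2 he
    rw [Finset.mem_range] at hr1 hr2
    have heq : (r1 : ℤ) + n * Y r1 = (r2 : ℤ) + n * Y r2 := hζinj he
    have hb1 : (r1 : ℤ) < n := by exact_mod_cast hr1
    have hb2 : (r2 : ℤ) < n := by exact_mod_cast hr2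
    have hb3 : (0 : ℤ) ≤ r1 := Int.ofNat_nonneg _
    have hb4 : (0 : ℤ) ≤ r2 := Int.ofNat_nonneg _
    have hD : (r1 : ℤ) - r2 = n * (Y r2 - Y r1) := by linear_combination heq
    have hn' : (0 : ℤ) < n := by exact_mod_cast hn
    rcases lt_trichotomy (Y r2 - Y r1) 0 with h | h | h
    · have : (n : ℤ) * (Y r2 - Y r1) ≤ n * (-1) :=
        mul_le_mul_of_nonneg_left (by omega) (by positivity)
      exfalso; linarith
    · rw [h, mul_zero] at hD
      omega
    · have : (n : ℤ) * 1 ≤ n * (Y r2 - Y r1) :=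
        mul_le_mul_of_nonneg_left (by omega) (by positivity)
      exfalso; linarith
  have hScard : S.card = n := by
    rw [hS, Finset.card_image_of_injOn (fun r1 h1 r2 h2 he => hinj3 r1 h1 r2 h2 he),
      Finset.card_range]
  have hSsub : ↑S ⊆ breakpoints (g ^ n) := by
    intro t ht
    rw [hS] at ht
    simp only [Finset.coe_image, Set.mem_image, Finset.mem_coe, Finset.mem_range] at ht
    obtain ⟨r, _, rfl⟩ := ht
    exact hbp r
  have hcount : n ≤ (breakpoints (g ^ n)).ncard := by
    have h := Set.ncard_le_ncard hSsub (bp_pow_finite hg n)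
    rw [Set.ncard_coe_finset] at h
    omega
  rw [Δ]
  omega
end Stmt
end

section
/- Every nontrivial element of PL(I, ∂I) is undistorted: if g ∈ PL(I, ∂I) with g ≠ id, and S is a nonempty finite subset of PL(I, ∂I), then there exists a real constant c > 0 such that for every positive integer n, whenever g^n is written as a composition of k factors each of which belongs to S or is the inverse of an element of S, one has k ≥ c·n. -/
open Set

namespace Stmt

/-! ### Auxiliary material -/

abbrev I : Set ℝ := Set.Icc (-1 : ℝ) 1

noncomputable def ext (f : Equiv.Perm I) : ℝ → ℝ :=
  fun t => (f (Set.projIcc (-1) 1 (by norm_num) t) : ℝ)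

lemma ext_apply (f : Equiv.Perm I) {t : ℝ} (ht : t ∈ I) :
    ext f t = (f ⟨t, ht⟩ : ℝ) := by
  unfold ext; rw [Set.projIcc_of_mem]

lemma ext_apply' (f : Equiv.Perm I) (u : I) : ext f (u : ℝ) = (f u : ℝ) := by
  rw [ext_apply f u.2]

lemma continuous_ext (f : Equiv.Perm I) (hf : Continuous f) : Continuous (ext f) :=
  continuous_subtype_val.comp (hf.comp continuous_projIcc)

lemma strictMonoOn_ext (f : Equiv.Perm I) (hf : IsPLHomeo f) :
    StrictMonoOn (ext f) I := by
  obtain ⟨hc, _, hm1, hp1, _⟩ := hf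
  apply ContinuousOn.strictMonoOn_of_injOn_Icc (by norm_num : (-1:ℝ) ≤ 1)
  · rw [ext_apply f negOne_mem_I, ext_apply f one_mem_I, hm1, hp1]; norm_num
  · exact (continuous_ext f hc).continuousOn
  · intro u hu v hv huv
    rw [ext_apply f hu, ext_apply f hv] at huv
    have : f ⟨u, hu⟩ = f ⟨v, hv⟩ := Subtype.ext huv
    simpa using f.injective this

/-- Two-sided Lipschitz sandwich for a PL homeomorphism. -/
lemma sandwich (f : Equiv.Perm I) (hf : IsPLHomeo f) :
    ∃ K : ℝ, 1 ≤ K ∧ ∀ u v : ℝ, u ∈ I → v ∈ I → u ≤ v →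
      K⁻¹ * (v - u) ≤ ext f v - ext f u ∧ ext f v - ext f u ≤ K * (v - u) := by
  obtain ⟨k, x, hx, hx0, hxl, hpiece⟩ := hf.2.2.2.2
  have hk : 0 < k := by
    rcases Nat.eq_zero_or_pos k with h | h
    · subst h
      rw [show (Fin.last 0) = 0 from rfl, hx0] at hxl; norm_num at hxl
    · exact h
  choose a b hab using hpiece
  have hmono := strictMonoOn_ext f hf
  have memx : ∀ j : Fin (k+1), x j ∈ I := by
    intro j
    constructor
    · rw [← hx0]; exact hx.monotone (Fin.zero_le j)
    · rw [← hxl]; exact hx.monotone (Fin.le_last j)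
  have hext : ∀ (i : Fin k) (t : ℝ) (ht : t ∈ I),
      x i.castSucc ≤ t → t ≤ x i.succ → ext f t = a i * t + b i := by
    intro i t ht h1 h2
    rw [ext_apply f ht]; exact hab i ⟨t, ht⟩ h1 h2
  have hapos : ∀ i : Fin k, 0 < a i := by
    intro i
    have hlt : x i.castSucc < x i.succ := hx (Fin.castSucc_lt_succ (i := i))
    have e1 := hext i _ (memx i.castSucc) le_rfl hlt.le
    have e2 := hext i _ (memx i.succ) hlt.le le_rfl
    have := hmono (memx i.castSucc) (memx i.succ) hlt
    rw [e1, e2] at this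
    nlinarith
  have hne : (Finset.univ : Finset (Fin k)).Nonempty := ⟨⟨0, hk⟩, Finset.mem_univ _⟩
  set K : ℝ := Finset.univ.sup' hne (fun i => max (a i) (a i)⁻¹) with hK
  have hKa : ∀ i : Fin k, a i ≤ K ∧ K⁻¹ ≤ a i := by
    intro i
    have h1 : max (a i) (a i)⁻¹ ≤ K := by
      have := Finset.le_sup' (fun i => max (a i) (a i)⁻¹) (Finset.mem_univ i)
      rw [← hK] at this; exact this
    refine ⟨le_trans (le_max_left _ _) h1, ?_⟩
    have h2 : (a i)⁻¹ ≤ K := le_trans (le_max_right _ _) h1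
    have h3 : (0:ℝ) < (a i)⁻¹ := inv_pos.2 (hapos i)
    have hKpos : 0 < K := lt_of_lt_of_le h3 h2
    rw [inv_le_comm₀ hKpos (hapos i)]
    exact h2
  have hK1 : 1 ≤ K := by
    obtain ⟨i0⟩ : Nonempty (Fin k) := ⟨⟨0, hk⟩⟩
    rcases le_total (a i0) 1 with h | h
    · calc (1:ℝ) ≤ (a i0)⁻¹ := (one_le_inv_iff₀.2 ⟨hapos i0, h⟩)
        _ ≤ K := by
          have := Finset.le_sup' (fun i => max (a i) (a i)⁻¹) (Finset.mem_univ i0)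
          rw [← hK] at this; exact le_trans (le_max_right _ _) this
    · exact le_trans h (hKa i0).1
  refine ⟨K, hK1, ?_⟩
  have hKpos : (0:ℝ) < K := lt_of_lt_of_le one_pos hK1
  -- single-piece bound
  have hpb : ∀ (i : Fin k) (u v : ℝ), u ∈ I → v ∈ I → x i.castSucc ≤ u → u ≤ v →
      v ≤ x i.succ → K⁻¹ * (v - u) ≤ ext f v - ext f u ∧ ext f v - ext f u ≤ K * (v - u) := by
    intro i u v hu hv h1 h2 h3
    rw [hext i u hu h1 (le_trans h2 h3), hext i v hv (le_trans h1 h2) h3]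
    have hd : a i * v + b i - (a i * u + b i) = a i * (v - u) := by ring
    rw [hd]
    constructor
    · exact mul_le_mul_of_nonneg_right (hKa i).2 (by linarith)
    · exact mul_le_mul_of_nonneg_right (hKa i).1 (by linarith)
  have main : ∀ m : ℕ, ∀ hm : m ≤ k, ∀ u v : ℝ, u ∈ I → v ∈ I → u ≤ v →
      v ≤ x ⟨m, Nat.lt_succ_of_le hm⟩ →
      K⁻¹ * (v - u) ≤ ext f v - ext f u ∧ ext f v - ext f u ≤ K * (v - u) := by
    intro m
    induction m with
    | zero =>
      intro hm u v hu hv huv hvx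
      have : v ≤ -1 := by rw [← hx0]; exact hvx
      have : u = v := le_antisymm huv (le_trans this hu.1)
      subst this; simp
    | succ m ih =>
      intro hm u v hu hv huv hvx
      have hmk : m < k := hm
      set i : Fin k := ⟨m, hmk⟩ with hi
      have hcs : x i.castSucc = x ⟨m, Nat.lt_succ_of_le (le_of_lt hmk)⟩ := rfl
      have hsc : x i.succ = x ⟨m+1, Nat.lt_succ_of_le hm⟩ := rfl
      rcases le_total v (x i.castSucc) with h | h
      · exact ih (le_of_lt hmk) u v hu hv huv (hcs ▸ h)
      rcases le_total (x i.castSucc) u with h' | h'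
      · exact hpb i u v hu hv h' huv (hsc ▸ hvx)
      · -- split at x i.castSucc
        have hmem : x i.castSucc ∈ I := memx _
        have r1 := ih (le_of_lt hmk) u (x i.castSucc) hu hmem h' (hcs ▸ le_rfl)
        have r2 := hpb i (x i.castSucc) v hmem hv le_rfl h (hsc ▸ hvx)
        constructor <;> [nlinarith [r1.1, r2.1]; nlinarith [r1.2, r2.2]]
  intro u v hu hv huv
  refine main k le_rfl u v hu hv huv ?_
  have : (⟨k, Nat.lt_succ_of_le le_rfl⟩ : Fin (k+1)) = Fin.last k := rfl
  rw [this, hxl]; exact hv.2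

/-- Bi-Lipschitz bounds in absolute-value form, for `f` and its inverse. -/
lemma lip_pair (f : Equiv.Perm I) (hf : IsPLHomeo f) :
    ∃ K : ℝ, 1 ≤ K ∧ ∀ u v : I,
      (|(f v : ℝ) - (f u : ℝ)| ≤ K * |(v : ℝ) - (u : ℝ)| ∧
        |(v : ℝ) - (u : ℝ)| ≤ K * |(f v : ℝ) - (f u : ℝ)|) := by
  obtain ⟨K, hK1, hs⟩ := sandwich f hf
  have hKpos : (0:ℝ) < K := lt_of_lt_of_le one_pos hK1
  refine ⟨K, hK1, ?_⟩
  have base : ∀ u v : I, (u : ℝ) ≤ v →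
      |(f v : ℝ) - (f u : ℝ)| ≤ K * |(v : ℝ) - (u : ℝ)| ∧
        |(v : ℝ) - (u : ℝ)| ≤ K * |(f v : ℝ) - (f u : ℝ)| := by
    intro u v huv
    obtain ⟨h1, h2⟩ := hs u v u.2 v.2 huv
    rw [ext_apply' f u, ext_apply' f v] at h1 h2
    have hd0 : (0:ℝ) ≤ (f v : ℝ) - (f u : ℝ) := by
      have : (0:ℝ) ≤ K⁻¹ * ((v:ℝ) - u) := mul_nonneg (by positivity) (by linarith)
      linarith
    rw [abs_of_nonneg hd0, abs_of_nonneg (by linarith : (0:ℝ) ≤ (v:ℝ) - u)]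
    refine ⟨h2, ?_⟩
    have := mul_le_mul_of_nonneg_left h1 (le_of_lt hKpos)
    rw [← mul_assoc, mul_inv_cancel₀ (ne_of_gt hKpos), one_mul] at this
    exact this
  intro u v
  rcases le_total (u : ℝ) (v : ℝ) with h | h
  · exact base u v h
  · obtain ⟨h1, h2⟩ := base v u h
    rw [abs_sub_comm ((f v : ℝ)) ((f u : ℝ)), abs_sub_comm ((v:ℝ)) ((u:ℝ))]
    exact ⟨h1, h2⟩

def Lip (K : ℝ) (f : Equiv.Perm I) : Prop :=
  ∀ u v : I, |(f v : ℝ) - (f u : ℝ)| ≤ K * |(v : ℝ) - (u : ℝ)|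

lemma lip_mono {K K' : ℝ} {f : Equiv.Perm I} (h : Lip K f) (hKK' : K ≤ K') : Lip K' f :=
  fun u v => le_trans (h u v) (mul_le_mul_of_nonneg_right hKK' (abs_nonneg _))

lemma lip_inv_of_pair {K : ℝ} {f : Equiv.Perm I}
    (h : ∀ u v : I, |(v : ℝ) - (u : ℝ)| ≤ K * |(f v : ℝ) - (f u : ℝ)|) : Lip K f⁻¹ := by
  intro u v
  have := h (f⁻¹ u) (f⁻¹ v)
  simpa using this

lemma lip_prod {M : ℝ} (hM : 0 ≤ M) :
    ∀ l : List (Equiv.Perm I), (∀ x ∈ l, Lip M x) → Lip (M ^ l.length) l.prod := by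
  intro l
  induction l with
  | nil => intro _ u v; simp
  | cons h t ih =>
    intro hl u v
    have hh : Lip M h := hl h (List.mem_cons_self (a := h) (l := t))
    have ht : Lip (M ^ t.length) t.prod := ih (fun x hx => hl x (List.mem_cons_of_mem h hx))
    have e : ((h :: t).prod) u = h (t.prod u) := by
      rw [List.prod_cons]; rfl
    have e' : ((h :: t).prod) v = h (t.prod v) := by
      rw [List.prod_cons]; rfl
    rw [e, e']
    calc |(h (t.prod v) : ℝ) - (h (t.prod u) : ℝ)|
        ≤ M * |(t.prod v : ℝ) - (t.prod u : ℝ)| := hh _ _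
      _ ≤ M * (M ^ t.length * |(v : ℝ) - (u : ℝ)|) :=
          mul_le_mul_of_nonneg_left (ht u v) hM
      _ = M ^ (h :: t).length * |(v : ℝ) - (u : ℝ)| := by
          rw [List.length_cons, pow_succ]; ring

lemma lip_prod_inv {M : ℝ} (hM : 0 ≤ M) (l : List (Equiv.Perm I))
    (hl : ∀ x ∈ l, Lip M x⁻¹) : Lip (M ^ l.length) l.prod⁻¹ := by
  rw [List.prod_inv_reverse]
  have hlen : ((l.map fun x => x⁻¹).reverse).length = l.length := by simp
  rw [← hlen]
  apply lip_prod hM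
  intro y hy
  rw [List.mem_reverse, List.mem_map] at hy
  obtain ⟨z, hz, rfl⟩ := hy
  exact hl z hz


/-- A nontrivial PL homeomorphism has a fixed point `q` near which it is `t ↦ q + a (t - q)`
on the right, with slope `a > 0`, `a ≠ 1`. -/
lemma exists_fixed_slope (g : Equiv.Perm I) (hg : IsPLHomeo g) (hne : g ≠ 1) :
    ∃ (q a ε : ℝ), q ∈ I ∧ 0 < ε ∧ q + ε ≤ 1 ∧ 0 < a ∧ a ≠ 1 ∧
      ext g q = q ∧
      ∀ t : I, q ≤ (t : ℝ) → (t : ℝ) ≤ q + ε → (g t : ℝ) = q + a * ((t : ℝ) - q) := by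
  have hx0 : ∃ x0 : I, g x0 ≠ x0 := by
    by_contra h
    push_neg at h
    exact hne (Equiv.ext fun x => by simpa using h x)
  obtain ⟨x0, hx0⟩ := hx0
  set A : Set ℝ := {t : ℝ | t ∈ Set.Icc (-1 : ℝ) (x0 : ℝ) ∧ ext g t = t} with hA
  have hAclosed : IsClosed A :=
    IsClosed.inter isClosed_Icc (isClosed_eq (continuous_ext g hg.1) continuous_id)
  have hAne : A.Nonempty := by
    refine ⟨-1, ⟨le_rfl, x0.2.1⟩, ?_⟩
    rw [ext_apply g negOne_mem_I, hg.2.2.1]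
  have hAbdd : BddAbove A := ⟨(x0 : ℝ), fun t ht => ht.1.2⟩
  set q : ℝ := sSup A with hq
  have hqA : q ∈ A := hAclosed.csSup_mem hAne hAbdd
  have hq1 : -1 ≤ q := hqA.1.1
  have hqx0 : q ≤ (x0 : ℝ) := hqA.1.2
  have hgq : ext g q = q := hqA.2
  have hqlt : q < (x0 : ℝ) := by
    rcases lt_or_eq_of_le hqx0 with h | h
    · exact h
    · exfalso
      apply hx0
      apply Subtype.ext
      have := hgq
      rw [h, ext_apply' g x0] at this
      exact this
  have hnofix : ∀ t : ℝ, q < t → t ≤ (x0 : ℝ) → ext g t ≠ t := by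
    intro t h1 h2 he
    exact absurd (le_csSup hAbdd ⟨⟨by linarith, h2⟩, he⟩) (not_le.2 h1)
  obtain ⟨k, x, hxm, hx0eq, hxleq, hpiece⟩ := hg.2.2.2.2
  have hk : 0 < k := by
    rcases Nat.eq_zero_or_pos k with h | h
    · subst h
      rw [show (Fin.last 0) = 0 from rfl, hx0eq] at hxleq; norm_num at hxleq
    · exact h
  have hq_lt1 : q < 1 := lt_of_lt_of_le hqlt x0.2.2
  classical
  set J : Finset (Fin (k+1)) := Finset.univ.filter (fun j => x j ≤ q) with hJ
  have hJne : J.Nonempty := ⟨0, by simp [hJ, hx0eq, hq1]⟩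
  set j : Fin (k+1) := J.max' hJne with hjdef
  have hj : x j ≤ q := (Finset.mem_filter.1 (J.max'_mem hJne)).2
  have hjne : j ≠ Fin.last k := by
    intro h
    rw [h, hxleq] at hj
    linarith
  obtain ⟨i, hi⟩ := Fin.exists_castSucc_eq.mpr hjne
  have hcs : x i.castSucc ≤ q := hi ▸ hj
  have hscq : q < x i.succ := by
    by_contra hcon
    push_neg at hcon
    have hmem : i.succ ∈ J := by simp [hJ, hcon]
    have hle : i.succ ≤ j := Finset.le_max' J _ hmem
    rw [← hi] at hle
    exact absurd hle (not_le.2 (Fin.castSucc_lt_succ (i := i)))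
  set ε : ℝ := min (x i.succ) ((x0 : ℝ)) - q with hεdef
  have hε : 0 < ε := by
    have := lt_min hscq hqlt
    simp only [hεdef]; linarith
  have hqεs : q + ε ≤ x i.succ := by
    have : min (x i.succ) ((x0 : ℝ)) ≤ x i.succ := min_le_left _ _
    simp only [hεdef]; linarith
  have hqεx0 : q + ε ≤ (x0 : ℝ) := by
    have : min (x i.succ) ((x0 : ℝ)) ≤ (x0 : ℝ) := min_le_right _ _
    simp only [hεdef]; linarith
  have hqε1 : q + ε ≤ 1 := le_trans hqεx0 x0.2.2
  have hqI : q ∈ I := ⟨hq1, by linarith⟩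
  obtain ⟨a, b, hab⟩ := hpiece i
  have hform0 : ∀ (t : ℝ) (ht : t ∈ I), q ≤ t → t ≤ q + ε → ext g t = a * t + b := by
    intro t ht h1 h2
    rw [ext_apply g ht]
    exact hab ⟨t, ht⟩ (le_trans hcs h1) (le_trans h2 hqεs)
  have haqb : a * q + b = q := by
    have := hform0 q hqI le_rfl (by linarith)
    rw [hgq] at this
    exact this.symm
  have hform : ∀ t : I, q ≤ (t : ℝ) → (t : ℝ) ≤ q + ε → (g t : ℝ) = q + a * ((t : ℝ) - q) := by
    intro t h1 h2
    have := hform0 (t : ℝ) t.2 h1 h2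
    rw [ext_apply' g t] at this
    rw [this]
    linarith [haqb, (by ring : a * (t : ℝ) + b = a * ((t:ℝ) - q) + (a * q + b))]
  have ht1I : q + ε ∈ I := ⟨by linarith, hqε1⟩
  have he1 : ext g (q + ε) = q + a * ε := by
    rw [ext_apply g ht1I, hform ⟨q + ε, ht1I⟩ (by simp; linarith) (by simp)]
    ring_nf
  have hane : a ≠ 1 := by
    intro h
    apply hnofix (q + ε) (by linarith) hqεx0
    rw [he1, h]; ring
  have hapos : 0 < a := by
    have := strictMonoOn_ext g hg hqI ht1I (by linarith : q < q + ε)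
    rw [hgq, he1] at this
    nlinarith
  exact ⟨q, a, ε, hqI, hε, hqε1, hapos, hane, hgq, hform⟩

/-- Every nontrivial element of `PL(I,∂I)` is undistorted: for `g ≠ 1` in `PL(I,∂I)` and any
nonempty finite subset `S` of `PL(I,∂I)` there is `c > 0` such that any expression of `gⁿ`
as a product of `k` factors from `S` or inverses of elements of `S` has `k ≥ c·n`. -/
theorem pl_undistorted (g : Equiv.Perm (Set.Icc (-1 : ℝ) 1)) (hg : Stmt.IsPLHomeo g)
    (hne : g ≠ 1) (S : Finset (Equiv.Perm (Set.Icc (-1 : ℝ) 1))) (hS : S.Nonempty)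
    (hSPL : ∀ s ∈ S, Stmt.IsPLHomeo s) :
    ∃ c : ℝ, 0 < c ∧ ∀ n : ℕ, 0 < n → ∀ l : List (Equiv.Perm (Set.Icc (-1 : ℝ) 1)),
      (∀ x ∈ l, x ∈ S ∨ x⁻¹ ∈ S) → g ^ n = l.prod → c * n ≤ l.length := by
  obtain ⟨q, a, ε, hqI, hε, hqε1, hapos, hane, hgq, hform⟩ := exists_fixed_slope g hg hne
  -- uniform bi-Lipschitz constant for S
  have hSK : ∀ s ∈ S, ∃ K, 1 ≤ K ∧ Lip K s ∧ Lip K s⁻¹ := by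
    intro s hs
    obtain ⟨K, hK1, hp⟩ := lip_pair s (hSPL s hs)
    exact ⟨K, hK1, fun u v => (hp u v).1, lip_inv_of_pair (fun u v => (hp u v).2)⟩
  choose! K hK1 hKf hKi using hSK
  set M : ℝ := max (S.sup' hS K) 2 with hM
  have hM2 : (2 : ℝ) ≤ M := le_max_right _ _
  have hM1 : (1 : ℝ) < M := by linarith
  have hMpos : (0 : ℝ) ≤ M := by linarith
  have hMs : ∀ s ∈ S, Lip M s ∧ Lip M s⁻¹ := by
    intro s hs
    have hle : K s ≤ M := le_trans (Finset.le_sup' K hs) (le_max_left _ _)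
    exact ⟨lip_mono (hKf s hs) hle, lip_mono (hKi s hs) hle⟩
  set lam : ℝ := max a a⁻¹ with hlamdef
  have hainv : a < 1 → 1 < a⁻¹ := fun h => (one_lt_inv₀ hapos).2 h
  have hlam1 : 1 < lam := by
    rcases lt_or_gt_of_ne hane with h | h
    · exact lt_of_lt_of_le (hainv h) (le_max_right _ _)
    · exact lt_of_lt_of_le h (le_max_left _ _)
  have hlampos : (0 : ℝ) < lam := by linarith
  refine ⟨Real.log lam / Real.log M,
    div_pos (Real.log_pos hlam1) (Real.log_pos hM1), ?_⟩
  intro n hn l hl hprod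
  have hw : Lip (M ^ l.length) l.prod := by
    apply lip_prod hMpos
    intro x hx
    rcases hl x hx with h | h
    · exact (hMs x h).1
    · have := (hMs _ h).2
      rwa [inv_inv] at this
  have hwinv : Lip (M ^ l.length) l.prod⁻¹ := by
    apply lip_prod_inv hMpos
    intro x hx
    rcases hl x hx with h | h
    · exact (hMs x h).2
    · exact (hMs _ h).1
  -- the two test points
  have hmax1 : (1 : ℝ) ≤ max a 1 := le_max_right _ _
  have hmaxpos : (0 : ℝ) < max a 1 := by linarith
  set δ : ℝ := ε / (max a 1) ^ n with hδdef
  have hδpos : 0 < δ := div_pos hε (pow_pos hmaxpos n)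
  have hδε : ∀ m : ℕ, m ≤ n → a ^ m * δ ≤ ε := by
    intro m hm
    have h1 : a ^ m ≤ (max a 1) ^ m := pow_le_pow_left₀ hapos.le (le_max_left _ _) m
    have h2 : (max a 1) ^ m ≤ (max a 1) ^ n := pow_le_pow_right₀ hmax1 hm
    have h3 : a ^ m * δ ≤ (max a 1) ^ n * δ :=
      mul_le_mul_of_nonneg_right (le_trans h1 h2) hδpos.le
    have h4 : (max a 1) ^ n * δ = ε := by
      rw [hδdef]
      field_simp
    linarith
  have hδle : δ ≤ ε := by
    have := hδε 0 (Nat.zero_le n)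
    simpa using this
  have hvI : q + δ ∈ I := ⟨by have := hqI.1; linarith, by linarith⟩
  set u : I := ⟨q, hqI⟩ with hu
  set v : I := ⟨q + δ, hvI⟩ with hv
  have hgu : g u = u := by
    apply Subtype.ext
    rw [← ext_apply' g u]
    exact hgq
  have hgun : ∀ m : ℕ, (g ^ m) u = u := by
    intro m
    induction m with
    | zero => simp
    | succ m ih => rw [pow_succ, Equiv.Perm.mul_apply, hgu, ih]
  have hgvn : ∀ m : ℕ, m ≤ n → ((g ^ m) v : ℝ) = q + a ^ m * δ := by
    intro m
    induction m with
    | zero => intro _; simp [hv]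
    | succ m ih =>
      intro hm
      have ihm := ih (by omega)
      have hm' : m ≤ n := by omega
      have h1 : q ≤ ((g ^ m) v : ℝ) := by
        rw [ihm]
        nlinarith [pow_nonneg hapos.le m, hδpos.le]
      have h2 : ((g ^ m) v : ℝ) ≤ q + ε := by
        rw [ihm]
        linarith [hδε m hm']
      rw [pow_succ', Equiv.Perm.mul_apply, hform ((g ^ m) v) h1 h2, ihm]
      ring
  have e1 : ((l.prod) u : ℝ) = q := by
    rw [← hprod, hgun n]
  have e2 : ((l.prod) v : ℝ) = q + a ^ n * δ := by
    rw [← hprod]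
    exact hgvn n le_rfl
  have hanpos : (0 : ℝ) < a ^ n := pow_pos hapos n
  have key : lam ^ n ≤ M ^ l.length := by
    rcases lt_or_gt_of_ne hane with hlt | hgt
    · -- a < 1 : use the inverse word
      have hle := hwinv (l.prod u) (l.prod v)
      simp only [Equiv.Perm.inv_def, Equiv.symm_apply_apply] at hle
      rw [e1, e2] at hle
      have hd1 : |(q + δ : ℝ) - q| = δ := by
        rw [show (q + δ : ℝ) - q = δ by ring, abs_of_pos hδpos]
      have hd2 : |(q + a ^ n * δ : ℝ) - q| = a ^ n * δ := by
        rw [show (q + a ^ n * δ : ℝ) - q = a ^ n * δ by ring,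
          abs_of_pos (by positivity)]
      rw [hd1, hd2] at hle
      have h1 : 1 ≤ M ^ l.length * a ^ n := by
        have hMk : (0:ℝ) < M ^ l.length := pow_pos (by linarith) _
        nlinarith
      have hlameq : lam = a⁻¹ :=
        max_eq_right (le_trans hlt.le (hainv hlt).le)
      rw [hlameq, inv_pow, inv_eq_one_div, div_le_iff₀ hanpos]
      linarith
    · -- a > 1 : direct word
      have hle := hw u v
      rw [e1, e2] at hle
      have hd1 : |(q + δ : ℝ) - q| = δ := by
        rw [show (q + δ : ℝ) - q = δ by ring, abs_of_pos hδpos]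
      have hd2 : |(q + a ^ n * δ : ℝ) - q| = a ^ n * δ := by
        rw [show (q + a ^ n * δ : ℝ) - q = a ^ n * δ by ring,
          abs_of_pos (by positivity)]
      have hvu : ((v : ℝ)) = q + δ := rfl
      have huu : ((u : ℝ)) = q := rfl
      rw [hvu, huu, hd1, hd2] at hle
      have hlameq : lam = a := max_eq_left (by
        have : a⁻¹ < 1 := inv_lt_one_of_one_lt₀ hgt
        linarith)
      rw [hlameq]
      nlinarith
  have hlog := Real.log_le_log (pow_pos hlampos n) key
  rw [Real.log_pow, Real.log_pow] at hlog
  rw [div_mul_eq_mul_div, div_le_iff₀ (Real.log_pos hM1), mul_comm]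
  exact_mod_cast hlog

end Stmt
end
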